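/- arXiv:2603.02956 — 3 statements merged into one kernel-verified Lean document; each statement's English description precedes it below -/
import Mathlib

section
/- Every simple graph G on n vertices with a vertex of degree n−1 (a universal vertex) and at least 2 edges is antimagic. -/
/-- An antimagic labelling of a finite simple graph `G` with `m` edges is a bijection from the
edge set onto `{1, ..., m}` such that the vertex-sums are pairwise distinct. -/
def SimpleGraph.IsAntimagic {V : Type*} [Fintype V] [DecidableEq V]
    (G : SimpleGraph V) [DecidableRel G.Adj] : Prop :=
  ∃ f : Sym2 V → ℕ,
    Set.BijOn f ↑G.edgeFinset ↑(Finset.Icc 1 G.edgeFinset.card) ∧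
    Function.Injective (fun v : V => ∑ e ∈ G.incidenceFinset v, f e)

open Finset

/-- Rank auxiliary lemma: there is a "rank" function on a finset, bijective onto
`range s.card` and weakly monotone with respect to a given weight. -/
lemma exists_rank {α : Type*} [Fintype α] [DecidableEq α] (s : Finset α) (wt : α → ℕ) :
    ∃ π : α → ℕ, Set.BijOn π ↑s ↑(Finset.range s.card) ∧
      ∀ v ∈ s, ∀ w ∈ s, π v ≤ π w → wt v ≤ wt w := by
  rcases s.eq_empty_or_nonempty with rfl | ⟨v0, hv0⟩
  · exact ⟨fun _ => 0, by simp, by simp⟩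
  have hα : Nonempty α := ⟨v0⟩
  set n := Fintype.card α with hn
  have hn0 : 0 < n := Fintype.card_pos
  set idx : α → ℕ := fun v => ((Fintype.equivFin α) v : ℕ) with hidx
  have hidxlt : ∀ v, idx v < n := fun v => ((Fintype.equivFin α) v).isLt
  set key : α → ℕ := fun v => wt v * n + idx v with hkey
  have hkeymono : ∀ v w, key v ≤ key w → wt v ≤ wt w := by
    intro v w h
    by_contra hlt
    push_neg at hlt
    have : key w < key v := by
      calc key w = wt w * n + idx w := rfl
        _ < wt w * n + n := by have := hidxlt w; omega
        _ = (wt w + 1) * n := by ring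
        _ ≤ wt v * n := Nat.mul_le_mul_right n hlt
        _ ≤ key v := Nat.le_add_right _ _
    omega
  have hkeyinj : Function.Injective key := by
    intro v w h
    have h1 : wt v = wt w := le_antisymm (hkeymono v w h.le) (hkeymono w v h.ge)
    have h2 : idx v = idx w := by simp only [hkey, h1] at h; omega
    exact (Fintype.equivFin α).injective (Fin.val_injective h2)
  set s' : Finset ℕ := s.image key with hs'
  have hcard : s'.card = s.card := Finset.card_image_of_injective s hkeyinj
  set iso := s'.orderIsoOfFin hcard with hiso
  have hmemim : ∀ v ∈ s, key v ∈ s' := fun v hv => Finset.mem_image_of_mem key hv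
  set π : α → ℕ := fun v =>
    if hv : v ∈ s then ((iso.symm ⟨key v, hmemim v hv⟩ : Fin s.card) : ℕ) else 0 with hπ
  have hπeq : ∀ v (hv : v ∈ s), π v = ((iso.symm ⟨key v, hmemim v hv⟩ : Fin s.card) : ℕ) := by
    intro v hv; simp [hπ, hv]
  have hkle : ∀ v (hv : v ∈ s) w (hw : w ∈ s), π v ≤ π w → key v ≤ key w := by
    intro v hv w hw h
    rw [hπeq v hv, hπeq w hw] at h
    have h' : iso.symm ⟨key v, hmemim v hv⟩ ≤ iso.symm ⟨key w, hmemim w hw⟩ := h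
    exact Subtype.coe_le_coe.mpr (iso.symm.le_iff_le.mp h')
  refine ⟨π, ⟨?_, ?_, ?_⟩, ?_⟩
  · intro v hv
    simp only [Finset.coe_range, Set.mem_Iio]
    rw [hπeq v hv]
    exact (iso.symm ⟨key v, hmemim v hv⟩).isLt
  · intro v hv w hw h
    rw [hπeq v hv, hπeq w hw] at h
    have := iso.symm.injective (Fin.val_injective h)
    exact hkeyinj (Subtype.ext_iff.mp this)
  · intro j hj
    simp only [Finset.coe_range, Set.mem_Iio] at hj
    have hmem : ((iso ⟨j, hj⟩ : s') : ℕ) ∈ s' := (iso ⟨j, hj⟩).2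
    obtain ⟨v, hv, hkv⟩ := Finset.mem_image.mp hmem
    refine ⟨v, hv, ?_⟩
    rw [hπeq v hv]
    have : (⟨key v, hmemim v hv⟩ : s') = iso ⟨j, hj⟩ := Subtype.ext hkv
    rw [this, OrderIso.symm_apply_apply]
  · intro v hv w hw h
    exact hkeymono v w (hkle v hv w hw h)

/-- Auxiliary unfolded form of the main theorem. -/
theorem antimagic_aux {V : Type*} [Fintype V] [DecidableEq V]
    (G : SimpleGraph V) [DecidableRel G.Adj] (r : V)
    (hr : G.degree r = Fintype.card V - 1) (hm : 2 ≤ G.edgeFinset.card) :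
    (∃ f : Sym2 V → ℕ,
    Set.BijOn f ↑G.edgeFinset ↑(Finset.Icc 1 G.edgeFinset.card) ∧
    Function.Injective (fun v : V => ∑ e ∈ G.incidenceFinset v, f e)) := by
  classical
  set m := G.edgeFinset.card with hmdef
  set k := G.degree r with hkdef
  have hIsub : G.incidenceFinset r ⊆ G.edgeFinset := by
    intro e he
    rw [SimpleGraph.mem_incidenceFinset] at he
    rw [SimpleGraph.mem_edgeFinset]
    exact he.1
  have hIcard : (G.incidenceFinset r).card = k := G.card_incidenceFinset_eq_degree r
  have hkm : k ≤ m := hIcard ▸ Finset.card_le_card hIsub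
  -- k ≥ 2
  have hk2 : 2 ≤ k := by
    by_contra hk
    push_neg at hk
    have hsub : G.edgeFinset ⊆ G.incidenceFinset r := by
      intro e he
      induction e with
      | _ a b =>
        rw [SimpleGraph.mem_edgeFinset, SimpleGraph.mem_edgeSet] at he
        rw [SimpleGraph.mem_incidenceFinset]
        refine ⟨SimpleGraph.mem_edgeSet G |>.mpr he, ?_⟩
        have hcard2 : Fintype.card V ≤ 2 := by
          have h1 : 1 ≤ Fintype.card V := Fintype.card_pos_iff.mpr ⟨r⟩
          omega
        have hab : a ≠ b := he.ne
        by_contra hre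
        rw [Sym2.mem_iff] at hre
        push_neg at hre
        have h1 : a ∉ ({b, r} : Finset V) := by
          simp only [Finset.mem_insert, Finset.mem_singleton]
          push_neg
          exact ⟨hab, fun h => hre.1 h.symm⟩
        have h2 : b ∉ ({r} : Finset V) := by
          simp only [Finset.mem_singleton]
          exact fun h => hre.2 h.symm
        have : ({a, b, r} : Finset V).card = 3 := by
          rw [Finset.card_insert_of_notMem h1, Finset.card_insert_of_notMem h2,
            Finset.card_singleton]
        have := Finset.card_le_univ ({a, b, r} : Finset V)
        omega
    have := Finset.card_le_card hsub
    omega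
  -- the set of non-r edges
  set E' := G.edgeFinset \ G.incidenceFinset r with hE'def
  have hE'card : E'.card = m - k := by
    rw [hE'def, Finset.card_sdiff_of_subset hIsub, hIcard]
  have hE'sub : E' ⊆ G.edgeFinset := Finset.sdiff_subset
  have hrE' : ∀ e ∈ E', ¬ r ∈ e := by
    intro e he hre
    rw [hE'def, Finset.mem_sdiff] at he
    have hin : e ∈ G.incidenceSet r := ⟨SimpleGraph.mem_edgeFinset.mp he.1, hre⟩
    exact he.2 (by rw [SimpleGraph.mem_incidenceFinset]; exact hin)
  -- labelling of non-r edges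
  set eqv := E'.equivFin with heqv
  set g : Sym2 V → ℕ := fun e => if h : e ∈ E' then ((eqv ⟨e, h⟩ : Fin E'.card) : ℕ) + 1 else 0
    with hgdef
  have hg1 : ∀ e ∈ E', 1 ≤ g e ∧ g e ≤ m - k := by
    intro e he
    simp only [hgdef, dif_pos he]
    constructor
    · omega
    · have := (eqv ⟨e, he⟩).isLt
      omega
  have hginj : ∀ e₁ ∈ E', ∀ e₂ ∈ E', g e₁ = g e₂ → e₁ = e₂ := by
    intro e₁ h₁ e₂ h₂ h
    simp only [hgdef, dif_pos h₁, dif_pos h₂, Nat.add_right_cancel_iff] at h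
    have := eqv.injective (Fin.val_injective h)
    exact Subtype.ext_iff.mp this
  -- weights
  set wt : V → ℕ := fun v => ∑ e ∈ (G.incidenceFinset v).erase s(v, r), g e with hwt
  -- neighbors of r
  set T := G.neighborFinset r with hT
  have hTcard : T.card = k := by rw [hT, SimpleGraph.card_neighborFinset_eq_degree]
  have hmemT : ∀ v : V, v ≠ r → v ∈ T := by
    intro v hv
    have hTsub : T ⊆ Finset.univ.erase r := by
      intro u hu
      rw [Finset.mem_erase]
      exact ⟨fun h => G.irrefl (h ▸ (SimpleGraph.mem_neighborFinset G r u).mp hu),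
        Finset.mem_univ u⟩
    have : T = Finset.univ.erase r := Finset.eq_of_subset_of_card_le hTsub (by
      rw [Finset.card_erase_of_mem (Finset.mem_univ r), Finset.card_univ, ← hr, hTcard])
    rw [this, Finset.mem_erase]
    exact ⟨hv, Finset.mem_univ v⟩
  obtain ⟨π, hπbij, hπmono⟩ := exists_rank T wt
  rw [hTcard] at hπbij
  -- the labelling
  set f : Sym2 V → ℕ := fun e =>
    if h : r ∈ e then (if e ∈ G.edgeFinset then m - k + π (Sym2.Mem.other' h) + 1 else 0)
    else g e with hf
  -- f on r-edges
  have hπlt : ∀ v ∈ T, π v < k := by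
    intro v hv
    have := hπbij.1 hv
    simpa using this
  have hfr : ∀ v ∈ T, f s(r, v) = m - k + π v + 1 := by
    intro v hv
    have hadj : G.Adj r v := (SimpleGraph.mem_neighborFinset G r v).mp hv
    have hre : r ∈ s(r, v) := Sym2.mem_mk_left r v
    have hedge : s(r, v) ∈ G.edgeFinset := SimpleGraph.mem_edgeFinset.mpr hadj
    have hoth : ∀ h : r ∈ s(r, v), Sym2.Mem.other' h = v := by
      intro h
      exact Sym2.congr_right.mp (Sym2.other_spec' h)
    rw [hf]
    simp only [dif_pos hre, if_pos hedge, hoth]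
  have hfE' : ∀ e ∈ E', f e = g e := by
    intro e he
    rw [hf]
    simp only [dif_neg (hrE' e he)]
  -- erased incidence sets lie in E'
  have hvr' : ∀ v ∈ T, v ≠ r := by
    intro v hv h
    exact G.irrefl (h ▸ (SimpleGraph.mem_neighborFinset G r v).mp hv)
  have hAE' : ∀ v ∈ T, (G.incidenceFinset v).erase s(v, r) ⊆ E' := by
    intro v hv e he
    rw [Finset.mem_erase] at he
    obtain ⟨hne, hinc⟩ := he
    rw [SimpleGraph.mem_incidenceFinset] at hinc
    obtain ⟨hedge, hve⟩ := hinc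
    rw [hE'def, Finset.mem_sdiff]
    refine ⟨SimpleGraph.mem_edgeFinset.mpr hedge, ?_⟩
    intro hc
    rw [SimpleGraph.mem_incidenceFinset] at hc
    exact hne ((Sym2.mem_and_mem_iff (hvr' v hv)).mp ⟨hve, hc.2⟩)
  -- the vertex sums
  have hmemI : ∀ v ∈ T, s(v, r) ∈ G.incidenceFinset v := by
    intro v hv
    have hadj : G.Adj r v := (SimpleGraph.mem_neighborFinset G r v).mp hv
    rw [SimpleGraph.mem_incidenceFinset]
    exact ⟨(SimpleGraph.mem_edgeSet G).mpr hadj.symm, Sym2.mem_mk_left v r⟩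
  have hσv : ∀ v ∈ T, ∑ e ∈ G.incidenceFinset v, f e = m - k + π v + 1 + wt v := by
    intro v hv
    rw [← Finset.insert_erase (hmemI v hv), Finset.sum_insert (Finset.notMem_erase _ _)]
    have h1 : f s(v, r) = m - k + π v + 1 := by rw [Sym2.eq_swap]; exact hfr v hv
    have h2 : ∑ e ∈ (G.incidenceFinset v).erase s(v, r), f e = wt v := by
      rw [show wt v = ∑ e ∈ (G.incidenceFinset v).erase s(v, r), g e from rfl]
      exact Finset.sum_congr rfl fun e he => hfE' e (hAE' v hv he)
    rw [h1, h2]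
  have hσr : ∑ e ∈ G.incidenceFinset r, f e = ∑ j ∈ Finset.range k, (m - k + j + 1) := by
    have himg : G.incidenceFinset r = T.image (fun v => s(r, v)) := by
      ext e
      simp only [Finset.mem_image, SimpleGraph.mem_incidenceFinset]
      constructor
      · rintro ⟨hE, hre⟩
        refine ⟨Sym2.Mem.other' hre, ?_, Sym2.other_spec' hre⟩
        rw [SimpleGraph.mem_neighborFinset]
        have hspec := Sym2.other_spec' hre
        rw [← hspec] at hE
        exact (SimpleGraph.mem_edgeSet G).mp hE
      · rintro ⟨v, hv, rfl⟩
        have hadj : G.Adj r v := (SimpleGraph.mem_neighborFinset G r v).mp hv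
        exact ⟨(SimpleGraph.mem_edgeSet G).mpr hadj, Sym2.mem_mk_left r v⟩
    rw [himg, Finset.sum_image (fun x _ y _ h => Sym2.congr_right.mp h),
      Finset.sum_congr rfl (fun v hv => hfr v hv)]
    exact Finset.sum_nbij π (fun a ha => by simpa using hπbij.1 ha)
      hπbij.2.1 hπbij.2.2 (fun x _ => rfl)
  have hwtle : ∀ v ∈ T, wt v ≤ (k - 1) * (m - k) := by
    intro v hv
    have hstep : wt v ≤ ((G.incidenceFinset v).erase s(v, r)).card * (m - k) := by
      have := Finset.sum_le_card_nsmul ((G.incidenceFinset v).erase s(v, r)) g (m - k)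
        (fun e he => (hg1 e (hAE' v hv he)).2)
      simpa [smul_eq_mul] using this
    have hcard : ((G.incidenceFinset v).erase s(v, r)).card ≤ k - 1 := by
      rw [Finset.card_erase_of_mem (hmemI v hv), G.card_incidenceFinset_eq_degree]
      have h1 : G.degree v < Fintype.card V := G.degree_lt_card_verts v
      omega
    exact hstep.trans (Nat.mul_le_mul_right _ hcard)
  have hσrgt : ∀ v ∈ T, ∑ e ∈ G.incidenceFinset v, f e < ∑ e ∈ G.incidenceFinset r, f e := by
    intro v hv
    rw [hσv v hv, hσr]
    have hπv : π v ∈ Finset.range k := Finset.mem_range.mpr (hπlt v hv)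
    rw [← Finset.sum_erase_add _ _ hπv]
    have h1 : (k - 1) * (m - k + 1) ≤ ∑ j ∈ (Finset.range k).erase (π v), (m - k + j + 1) := by
      have := Finset.card_nsmul_le_sum ((Finset.range k).erase (π v))
        (fun j => m - k + j + 1) (m - k + 1) (fun j _ => by show m - k + 1 ≤ m - k + j + 1; omega)
      simpa [Finset.card_erase_of_mem hπv, Finset.card_range, smul_eq_mul] using this
    have h3 : (k - 1) * (m - k) < (k - 1) * (m - k + 1) :=
      mul_lt_mul_of_pos_left (by omega) (by omega)
    have key : wt v < ∑ j ∈ (Finset.range k).erase (π v), (m - k + j + 1) :=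
      lt_of_lt_of_le (lt_of_le_of_lt (hwtle v hv) h3) h1
    omega
  have hother : ∀ (e : Sym2 V), e ∈ G.edgeFinset → ∀ hre : r ∈ e, Sym2.Mem.other' hre ∈ T := by
    intro e he hre
    rw [SimpleGraph.mem_neighborFinset]
    have hE : e ∈ G.edgeSet := SimpleGraph.mem_edgeFinset.mp he
    rw [← Sym2.other_spec' hre] at hE
    exact (SimpleGraph.mem_edgeSet G).mp hE
  have hfval : ∀ (e : Sym2 V), e ∈ G.edgeFinset → ∀ hre : r ∈ e,
      f e = m - k + π (Sym2.Mem.other' hre) + 1 := by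
    intro e he hre
    rw [hf]
    simp only [dif_pos hre, if_pos he]
  have hmE' : ∀ e ∈ G.edgeFinset, r ∉ e → e ∈ E' := by
    intro e he hre
    refine Finset.mem_sdiff.mpr ⟨he, fun hc => hre ?_⟩
    rw [SimpleGraph.mem_incidenceFinset] at hc
    exact hc.2
  refine ⟨f, ⟨?_, ?_, ?_⟩, ?_⟩
  · -- MapsTo
    intro e he
    simp only [Finset.mem_coe] at he
    simp only [Finset.coe_Icc, Set.mem_Icc]
    by_cases hre : r ∈ e
    · rw [hfval e he hre]
      have := hπlt _ (hother e he hre)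
      omega
    · rw [hfE' e (hmE' e he hre)]
      have := hg1 e (hmE' e he hre)
      omega
  · -- InjOn
    intro e₁ h₁ e₂ h₂ h
    simp only [Finset.mem_coe] at h₁ h₂
    by_cases hr1 : r ∈ e₁ <;> by_cases hr2 : r ∈ e₂
    · rw [hfval e₁ h₁ hr1, hfval e₂ h₂ hr2] at h
      have hπeq : π (Sym2.Mem.other' hr1) = π (Sym2.Mem.other' hr2) := by omega
      have := hπbij.2.1 (Finset.mem_coe.mpr (hother e₁ h₁ hr1))
        (Finset.mem_coe.mpr (hother e₂ h₂ hr2)) hπeq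
      rw [← Sym2.other_spec' hr1, ← Sym2.other_spec' hr2, this]
    · exfalso
      rw [hfval e₁ h₁ hr1, hfE' e₂ (hmE' e₂ h₂ hr2)] at h
      have := (hg1 e₂ (hmE' e₂ h₂ hr2)).2
      omega
    · exfalso
      rw [hfval e₂ h₂ hr2, hfE' e₁ (hmE' e₁ h₁ hr1)] at h
      have := (hg1 e₁ (hmE' e₁ h₁ hr1)).2
      omega
    · have he₁ := hmE' e₁ h₁ hr1
      have he₂ := hmE' e₂ h₂ hr2
      rw [hfE' e₁ he₁, hfE' e₂ he₂] at h
      exact hginj e₁ he₁ e₂ he₂ h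
  · -- SurjOn
    intro j hj
    simp only [Finset.coe_Icc, Set.mem_Icc] at hj
    by_cases hjk : j ≤ m - k
    · have hjlt : j - 1 < E'.card := by omega
      set x := eqv.symm ⟨j - 1, hjlt⟩ with hx
      refine ⟨(x : Sym2 V), Finset.mem_coe.mpr (hE'sub x.2), ?_⟩
      rw [hfE' _ x.2]
      have : g (x : Sym2 V) = ((eqv ⟨(x : Sym2 V), x.2⟩ : Fin E'.card) : ℕ) + 1 := by
        rw [hgdef]
        simp only [dif_pos x.2]
      rw [this]
      have hxx : (⟨(x : Sym2 V), x.2⟩ : {e // e ∈ E'}) = x := rfl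
      rw [hxx, hx, Equiv.apply_symm_apply]
      simp only
      omega
    · have hj0 : j - (m - k) - 1 ∈ (↑(Finset.range k) : Set ℕ) := by
        simp only [Finset.coe_range, Set.mem_Iio]
        omega
      obtain ⟨v, hvT, hπv⟩ := hπbij.2.2 hj0
      have hvT' : v ∈ T := Finset.mem_coe.mp hvT
      have hadj : G.Adj r v := (SimpleGraph.mem_neighborFinset G r v).mp hvT'
      refine ⟨s(r, v), Finset.mem_coe.mpr (SimpleGraph.mem_edgeFinset.mpr hadj), ?_⟩
      rw [hfr v hvT', hπv]
      omega
  · -- vertex sums injective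
    intro v w h
    simp only at h
    by_contra hne
    have hlem : ∀ a ∈ T, ∀ b ∈ T, π a < π b →
        ∑ e ∈ G.incidenceFinset a, f e < ∑ e ∈ G.incidenceFinset b, f e := by
      intro a ha b hb hab
      rw [hσv a ha, hσv b hb]
      have := hπmono a ha b hb hab.le
      omega
    rcases eq_or_ne v r with hvr | hv
    · rcases eq_or_ne w r with hwr | hw
      · exact hne (hvr.trans hwr.symm)
      · have := hσrgt w (hmemT w hw)
        rw [hvr] at h
        omega
    · rcases eq_or_ne w r with hwr | hw
      · have := hσrgt v (hmemT v hv)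
        rw [hwr] at h
        omega
      · have hvT := hmemT v hv
        have hwT := hmemT w hw
        have hπne : π v ≠ π w := fun hc =>
          hne (hπbij.2.1 (Finset.mem_coe.mpr hvT) (Finset.mem_coe.mpr hwT) hc)
        rcases lt_or_gt_of_ne hπne with hlt | hgt
        · have := hlem v hvT w hwT hlt
          omega
        · have := hlem w hwT v hvT hgt
          omega

/-- Every simple graph with a universal vertex (a vertex of degree `n - 1`) and at least
two edges is antimagic. -/
theorem antimagic_of_universal_vertex {V : Type*} [Fintype V] [DecidableEq V]
    (G : SimpleGraph V) [DecidableRel G.Adj] (r : V)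
    (hr : G.degree r = Fintype.card V - 1) (hm : 2 ≤ G.edgeFinset.card) :
    G.IsAntimagic :=
  antimagic_aux G r hr hm
end

section
/- Let G be a graph with a proper edge colouring using k colour classes C_1,...,C_k, and suppose |E(G)| ≥ 3k. Then there exists a proper edge colouring of G with k colour classes each containing at least 3 edges. -/
set_option linter.unusedSectionVars false

namespace Rebal

variable {V : Type*} [DecidableEq V]

def IsMatch (S : Finset (Sym2 V)) : Prop :=
  ∀ e₁ ∈ S, ∀ e₂ ∈ S, e₁ ≠ e₂ → ∀ x, x ∈ e₁ → x ∉ e₂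

lemma isMatch_subset {S T : Finset (Sym2 V)} (h : S ⊆ T) (hT : IsMatch T) : IsMatch S :=
  fun e₁ h₁ e₂ h₂ hne x hx => hT e₁ (h h₁) e₂ (h h₂) hne x hx

lemma isMatch_insert {S : Finset (Sym2 V)} {e : Sym2 V} (hS : IsMatch S)
    (h : ∀ x ∈ e, ∀ f ∈ S, x ∉ f) : IsMatch (insert e S) := by
  intro e₁ h₁ e₂ h₂ hne x hx
  rcases Finset.mem_insert.1 h₁ with he₁ | g₁ <;> rcases Finset.mem_insert.1 h₂ with he₂ | g₂
  · exact absurd (he₁.trans he₂.symm) hne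
  · exact h x (he₁ ▸ hx) e₂ g₂
  · intro hx2; exact h x (he₂ ▸ hx2) e₁ g₁ hx
  · exact hS e₁ g₁ e₂ g₂ hne x hx

lemma isMatch_union {S T : Finset (Sym2 V)} (hS : IsMatch S) (hT : IsMatch T)
    (h : ∀ x, (∃ e ∈ S, x ∈ e) → ∀ f ∈ T, x ∉ f) : IsMatch (S ∪ T) := by
  intro e₁ h₁ e₂ h₂ hne x hx
  rcases Finset.mem_union.1 h₁ with h₁ | h₁ <;> rcases Finset.mem_union.1 h₂ with h₂ | h₂
  · exact hS e₁ h₁ e₂ h₂ hne x hx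
  · exact h x ⟨e₁, h₁, hx⟩ e₂ h₂
  · intro hx2; exact h x ⟨e₂, h₂, hx2⟩ e₁ h₁ hx
  · exact hT e₁ h₁ e₂ h₂ hne x hx

def edgeVerts (e : Sym2 V) : Finset V :=
  Sym2.lift ⟨fun a b => {a, b}, fun a b => Finset.pair_comm a b⟩ e

@[simp] lemma mem_edgeVerts {x : V} {e : Sym2 V} : x ∈ edgeVerts e ↔ x ∈ e := by
  induction e using Sym2.inductionOn with
  | hf a b => simp [edgeVerts, Sym2.mem_iff]

lemma card_edgeVerts {e : Sym2 V} (h : ¬ e.IsDiag) : (edgeVerts e).card = 2 := by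
  induction e using Sym2.inductionOn with
  | hf a b =>
    rw [Sym2.mk_isDiag_iff] at h
    simp [edgeVerts, Finset.card_pair h]

lemma card_supp_eq {N : Finset (Sym2 V)} (hN : IsMatch N) (hd : ∀ e ∈ N, ¬ e.IsDiag) :
    (N.biUnion edgeVerts).card = 2 * N.card := by
  rw [Finset.card_biUnion]
  · rw [Finset.sum_congr rfl fun e he => card_edgeVerts (hd e he)]
    simp [Finset.sum_const, mul_comm]
  · intro e₁ h₁ e₂ h₂ hne
    simp only [Finset.disjoint_left]
    intro x hx hx2
    exact hN e₁ h₁ e₂ h₂ hne x (mem_edgeVerts.1 hx) (mem_edgeVerts.1 hx2)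

lemma card_supp_le {M : Finset (Sym2 V)} (hd : ∀ e ∈ M, ¬ e.IsDiag) :
    (M.biUnion edgeVerts).card ≤ 2 * M.card := by
  calc (M.biUnion edgeVerts).card ≤ ∑ e ∈ M, (edgeVerts e).card := Finset.card_biUnion_le
    _ = 2 * M.card := by
        rw [Finset.sum_congr rfl fun e he => card_edgeVerts (hd e he)]
        simp [mul_comm]

lemma pathLemma (n : ℕ) : ∀ (M N : Finset (Sym2 V)), M.card + N.card ≤ n →
    (∀ e ∈ M, ¬ e.IsDiag) → (∀ e ∈ N, ¬ e.IsDiag) → IsMatch M → IsMatch N → Disjoint M N →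
    ∀ v w : V, s(v,w) ∈ N → (∀ f ∈ M, v ∉ f) →
    (∃ M' N' : Finset (Sym2 V), M' ∪ N' = M ∪ N ∧ Disjoint M' N' ∧ IsMatch M' ∧ IsMatch N' ∧
       M'.card = M.card + 1 ∧ N'.card + 1 = N.card ∧ (∃ f ∈ M', v ∈ f) ∧ (∀ f ∈ N', v ∉ f)) ∨
    (∃ P Q : Finset (Sym2 V), P ⊆ M ∧ Q ⊆ N ∧ s(v,w) ∈ Q ∧ P.card = Q.card ∧
       ∀ x, (∃ e ∈ P ∪ Q, x ∈ e) → ∀ g ∈ (M \ P) ∪ (N \ Q), x ∉ g) := by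
  induction n with
  | zero =>
    intro M N hn _ _ _ _ _ v w he _
    exfalso
    have : N = ∅ := Finset.card_eq_zero.1 (by omega)
    simp [this] at he
  | succ n ih =>
    intro M N hn hMd hNd hM hN hdisj v w he hv
    have hvw : v ≠ w := fun h => hNd _ he (Sym2.mk_isDiag_iff.2 h)
    have hvv : v ∈ s(v,w) := Sym2.mem_mk_left v w
    have hwv : w ∈ s(v,w) := Sym2.mem_mk_right v w
    have heM : s(v,w) ∉ M := fun h => (Finset.disjoint_left.1 hdisj h) he
    by_cases hw : ∃ f ∈ M, w ∈ f
    case neg =>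
      left
      refine ⟨insert (s(v,w)) M, N.erase (s(v,w)), ?_, ?_, ?_, ?_, ?_, ?_,
        ⟨_, Finset.mem_insert_self _ _, hvv⟩, ?_⟩
      · ext a
        simp only [Finset.mem_union, Finset.mem_insert, Finset.mem_erase]
        constructor
        · rintro ((rfl | h) | ⟨-, h⟩)
          exacts [Or.inr he, Or.inl h, Or.inr h]
        · rintro (h | h)
          · exact Or.inl (Or.inr h)
          · by_cases ha : a = s(v,w)
            · exact Or.inl (Or.inl ha)
            · exact Or.inr ⟨ha, h⟩
      · rw [Finset.disjoint_left]
        rintro a ha hae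
        rcases Finset.mem_insert.1 ha with rfl | ha
        · exact (Finset.mem_erase.1 hae).1 rfl
        · exact Finset.disjoint_left.1 hdisj ha (Finset.mem_erase.1 hae).2
      · refine isMatch_insert hM ?_
        intro x hx f hf
        rcases Sym2.mem_iff.1 hx with rfl | rfl
        · exact hv f hf
        · exact fun hxf => hw ⟨f, hf, hxf⟩
      · exact isMatch_subset (Finset.erase_subset _ _) hN
      · exact Finset.card_insert_of_notMem heM
      · exact Finset.card_erase_add_one he
      · intro f hf
        have h' := Finset.mem_erase.1 hf
        exact hN _ he f h'.2 (Ne.symm h'.1) v hvv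
    case pos =>
      obtain ⟨f, hfM, hwf⟩ := hw
      obtain ⟨u, rfl⟩ := Sym2.mem_iff_exists.1 hwf
      have hwu : w ≠ u := fun h => hMd _ hfM (Sym2.mk_isDiag_iff.2 h)
      have huf : u ∈ s(w,u) := Sym2.mem_mk_right w u
      have hvu : v ≠ u := fun h => hv _ hfM (h ▸ huf)
      have hfN : s(w,u) ∉ N := fun h => (Finset.disjoint_left.1 hdisj hfM) h
      have hef : s(v,w) ≠ s(w,u) := fun h => heM (h ▸ hfM)
      set M₀ := M.erase (s(w,u)) with hM₀def
      set N₀ := N.erase (s(v,w)) with hN₀def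
      have hvM₀ : ∀ g ∈ M₀, v ∉ g := fun g hg => hv g (Finset.mem_of_mem_erase hg)
      have hvN₀ : ∀ g ∈ N₀, v ∉ g := fun g hg =>
        hN _ he g (Finset.mem_erase.1 hg).2 (Ne.symm (Finset.mem_erase.1 hg).1) v hvv
      have hwM₀ : ∀ g ∈ M₀, w ∉ g := fun g hg =>
        hM _ hfM g (Finset.mem_erase.1 hg).2 (Ne.symm (Finset.mem_erase.1 hg).1) w hwf
      have hwN₀ : ∀ g ∈ N₀, w ∉ g := fun g hg =>
        hN _ he g (Finset.mem_erase.1 hg).2 (Ne.symm (Finset.mem_erase.1 hg).1) w hwv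
      have huM₀ : ∀ g ∈ M₀, u ∉ g := fun g hg =>
        hM _ hfM g (Finset.mem_erase.1 hg).2 (Ne.symm (Finset.mem_erase.1 hg).1) u huf
      have hMcard : M₀.card + 1 = M.card := Finset.card_erase_add_one hfM
      have hNcard : N₀.card + 1 = N.card := Finset.card_erase_add_one he
      have hM₀sub : M₀ ⊆ M := Finset.erase_subset _ _
      have hN₀sub : N₀ ⊆ N := Finset.erase_subset _ _
      have hMN₀ : ∀ g, g ∈ M₀ ∪ N₀ → (v ∉ g ∧ w ∉ g) := by
        intro g hg
        rcases Finset.mem_union.1 hg with hg | hg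
        · exact ⟨hvM₀ g hg, hwM₀ g hg⟩
        · exact ⟨hvN₀ g hg, hwN₀ g hg⟩
      have heMN₀ : s(v,w) ∉ M₀ ∪ N₀ := fun h => (hMN₀ _ h).1 hvv
      have hfMN₀ : s(w,u) ∉ M₀ ∪ N₀ := fun h => (hMN₀ _ h).2 (Sym2.mem_mk_left w u)
      by_cases hu : ∃ g ∈ N₀, u ∈ g
      case neg =>
        right
        refine ⟨{s(w,u)}, {s(v,w)}, Finset.singleton_subset_iff.2 hfM,
          Finset.singleton_subset_iff.2 he, Finset.mem_singleton_self _, rfl, ?_⟩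
        intro x hx g hg
        have hg' : g ∈ M₀ ∪ N₀ := by
          rcases Finset.mem_union.1 hg with h | h
          · exact Finset.mem_union_left _ (by
              rw [hM₀def, ← Finset.sdiff_singleton_eq_erase]; exact h)
          · exact Finset.mem_union_right _ (by
              rw [hN₀def, ← Finset.sdiff_singleton_eq_erase]; exact h)
        obtain ⟨e', he', hxe'⟩ := hx
        have hx3 : x = v ∨ x = w ∨ x = u := by
          rcases Finset.mem_union.1 he' with h | h <;>
            rw [Finset.mem_singleton] at h <;> subst h
          · rcases Sym2.mem_iff.1 hxe' with rfl | rfl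
            · exact Or.inr (Or.inl rfl)
            · exact Or.inr (Or.inr rfl)
          · rcases Sym2.mem_iff.1 hxe' with rfl | rfl
            · exact Or.inl rfl
            · exact Or.inr (Or.inl rfl)
        rcases hx3 with rfl | rfl | rfl
        · exact (hMN₀ g hg').1
        · exact (hMN₀ g hg').2
        · rcases Finset.mem_union.1 hg' with h | h
          · exact huM₀ g h
          · exact fun hxg => hu ⟨g, h, hxg⟩
      case pos =>
        obtain ⟨e₂, he₂, hue₂⟩ := hu
        obtain ⟨z, rfl⟩ := Sym2.mem_iff_exists.1 hue₂
        have hcards : M₀.card + N₀.card ≤ n := by omega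
        have hres := ih M₀ N₀ hcards (fun g hg => hMd g (hM₀sub hg))
          (fun g hg => hNd g (hN₀sub hg)) (isMatch_subset hM₀sub hM)
          (isMatch_subset hN₀sub hN)
          (Finset.disjoint_of_subset_left hM₀sub (Finset.disjoint_of_subset_right hN₀sub hdisj))
          u z he₂ huM₀
        rcases hres with ⟨A, B, hun, hdAB, hmA, hmB, hcA, hcB, ⟨a, haA, hua⟩, huB⟩ |
          ⟨P₀, Q₀, hP₀, hQ₀, hgQ₀, hcPQ, hsep₀⟩
        · -- gain case: lift
          left
          have hmemAB : ∀ g, g ∈ A ∨ g ∈ B → g ∈ M₀ ∪ N₀ := by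
            intro g hg
            rw [← Finset.mem_union, hun] at hg
            exact hg
          have hvwAB : ∀ g, g ∈ A ∨ g ∈ B → v ∉ g ∧ w ∉ g := fun g hg => hMN₀ g (hmemAB g hg)
          have heA : s(v,w) ∉ A := fun h => heMN₀ (hmemAB _ (Or.inl h))
          have heB : s(v,w) ∉ B := fun h => heMN₀ (hmemAB _ (Or.inr h))
          have hfA : s(w,u) ∉ A := fun h => hfMN₀ (hmemAB _ (Or.inl h))
          have hfB : s(w,u) ∉ B := fun h => hfMN₀ (hmemAB _ (Or.inr h))
          refine ⟨insert (s(v,w)) A, insert (s(w,u)) B, ?_, ?_, ?_, ?_, ?_, ?_,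
            ⟨_, Finset.mem_insert_self _ _, hvv⟩, ?_⟩
          · ext g
            simp only [Finset.mem_union, Finset.mem_insert]
            have h1 : g ∈ A ∨ g ∈ B ↔ g ∈ M₀ ∨ g ∈ N₀ := by
              rw [← Finset.mem_union, ← Finset.mem_union, hun]
            have h2 : g ∈ M ↔ g = s(w,u) ∨ g ∈ M₀ := by
              rw [hM₀def, Finset.mem_erase]
              constructor
              · intro h; by_cases hc : g = s(w,u)
                · exact Or.inl hc
                · exact Or.inr ⟨hc, h⟩
              · rintro (rfl | ⟨-, h⟩)
                exacts [hfM, h]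
            have h3 : g ∈ N ↔ g = s(v,w) ∨ g ∈ N₀ := by
              rw [hN₀def, Finset.mem_erase]
              constructor
              · intro h; by_cases hc : g = s(v,w)
                · exact Or.inl hc
                · exact Or.inr ⟨hc, h⟩
              · rintro (rfl | ⟨-, h⟩)
                exacts [he, h]
            rw [h2, h3]
            constructor
            · rintro ((rfl | hA) | rfl | hB)
              · exact Or.inr (Or.inl rfl)
              · rcases h1.1 (Or.inl hA) with h | h
                · exact Or.inl (Or.inr h)
                · exact Or.inr (Or.inr h)
              · exact Or.inl (Or.inl rfl)
              · rcases h1.1 (Or.inr hB) with h | h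
                · exact Or.inl (Or.inr h)
                · exact Or.inr (Or.inr h)
            · rintro ((rfl | hM₀') | rfl | hN₀')
              · exact Or.inr (Or.inl rfl)
              · rcases h1.2 (Or.inl hM₀') with h | h
                · exact Or.inl (Or.inr h)
                · exact Or.inr (Or.inr h)
              · exact Or.inl (Or.inl rfl)
              · rcases h1.2 (Or.inr hN₀') with h | h
                · exact Or.inl (Or.inr h)
                · exact Or.inr (Or.inr h)
          · rw [Finset.disjoint_left]
            rintro g hg hg'
            rcases Finset.mem_insert.1 hg with rfl | hg <;>
              rcases Finset.mem_insert.1 hg' with h' | hg'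
            · exact hef h'
            · exact heB hg'
            · exact hfA (h' ▸ hg)
            · exact Finset.disjoint_left.1 hdAB hg hg'
          · refine isMatch_insert hmA ?_
            intro x hx g hg
            rcases Sym2.mem_iff.1 hx with rfl | rfl
            · exact (hvwAB g (Or.inl hg)).1
            · exact (hvwAB g (Or.inl hg)).2
          · refine isMatch_insert hmB ?_
            intro x hx g hg
            rcases Sym2.mem_iff.1 hx with rfl | rfl
            · exact (hvwAB g (Or.inr hg)).2
            · exact huB g hg
          · rw [Finset.card_insert_of_notMem heA]; omega
          · rw [Finset.card_insert_of_notMem hfB]; omega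
          · intro g hg
            rcases Finset.mem_insert.1 hg with rfl | hg
            · intro hvg
              rcases Sym2.mem_iff.1 hvg with h | h
              exacts [hvw h, hvu h]
            · exact (hvwAB g (Or.inr hg)).1
        · -- component case: lift
          right
          have hfP₀ : s(w,u) ∉ P₀ := fun h => Finset.notMem_erase _ _ (hP₀ h)
          have heQ₀ : s(v,w) ∉ Q₀ := fun h => Finset.notMem_erase _ _ (hQ₀ h)
          refine ⟨insert (s(w,u)) P₀, insert (s(v,w)) Q₀,
            Finset.insert_subset hfM (hP₀.trans hM₀sub),
            Finset.insert_subset he (hQ₀.trans hN₀sub),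
            Finset.mem_insert_self _ _, ?_, ?_⟩
          · rw [Finset.card_insert_of_notMem hfP₀, Finset.card_insert_of_notMem heQ₀, hcPQ]
          · intro x hx g hg
            have hg' : g ∈ (M₀ \ P₀) ∪ (N₀ \ Q₀) := by
              rcases Finset.mem_union.1 hg with h | h
              · refine Finset.mem_union_left _ ?_
                rw [Finset.sdiff_insert] at h
                have := Finset.mem_of_mem_erase h
                rw [Finset.mem_sdiff] at this ⊢
                refine ⟨?_, this.2⟩
                rw [hM₀def, Finset.mem_erase]
                exact ⟨Finset.ne_of_mem_erase h, this.1⟩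
              · refine Finset.mem_union_right _ ?_
                rw [Finset.sdiff_insert] at h
                have := Finset.mem_of_mem_erase h
                rw [Finset.mem_sdiff] at this ⊢
                refine ⟨?_, this.2⟩
                rw [hN₀def, Finset.mem_erase]
                exact ⟨Finset.ne_of_mem_erase h, this.1⟩
            have hg'' : g ∈ M₀ ∪ N₀ := by
              rcases Finset.mem_union.1 hg' with h | h
              · exact Finset.mem_union_left _ (Finset.mem_sdiff.1 h).1
              · exact Finset.mem_union_right _ (Finset.mem_sdiff.1 h).1
            obtain ⟨e', he', hxe'⟩ := hx
            have hcase : (e' ∈ P₀ ∪ Q₀) ∨ e' = s(w,u) ∨ e' = s(v,w) := by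
              rcases Finset.mem_union.1 he' with h | h <;> rcases Finset.mem_insert.1 h with h | h
              · exact Or.inr (Or.inl h)
              · exact Or.inl (Finset.mem_union_left _ h)
              · exact Or.inr (Or.inr h)
              · exact Or.inl (Finset.mem_union_right _ h)
            rcases hcase with h | rfl | rfl
            · exact hsep₀ x ⟨e', h, hxe'⟩ g hg'
            · rcases Sym2.mem_iff.1 hxe' with rfl | rfl
              · exact (hMN₀ g hg'').2
              · exact hsep₀ x ⟨s(x,z), Finset.mem_union_right _ hgQ₀, Sym2.mem_mk_left _ _⟩ g hg'
            · rcases Sym2.mem_iff.1 hxe' with rfl | rfl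
              · exact (hMN₀ g hg'').1
              · exact (hMN₀ g hg'').2

lemma gainLemma (n : ℕ) : ∀ M N : Finset (Sym2 V), M.card + N.card ≤ n →
    (∀ e ∈ M, ¬ e.IsDiag) → (∀ e ∈ N, ¬ e.IsDiag) → IsMatch M → IsMatch N → Disjoint M N →
    M.card < N.card →
    ∃ A B : Finset (Sym2 V), A ∪ B = M ∪ N ∧ Disjoint A B ∧ IsMatch A ∧ IsMatch B ∧
      A.card = M.card + 1 ∧ B.card + 1 = N.card := by
  induction n with
  | zero => intro M N hn _ _ _ _ _ hlt; omega
  | succ n ih =>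
    intro M N hn hMd hNd hM hN hdisj hlt
    have h1 : (N.biUnion edgeVerts).card = 2 * N.card := card_supp_eq hN hNd
    have h2 : (M.biUnion edgeVerts).card ≤ 2 * M.card := card_supp_le hMd
    have hns : ¬ (N.biUnion edgeVerts ⊆ M.biUnion edgeVerts) := fun h => by
      have := Finset.card_le_card h; omega
    obtain ⟨v, hvN, hvM⟩ := Finset.not_subset.1 hns
    obtain ⟨e, heN, hve⟩ := Finset.mem_biUnion.1 hvN
    have hvM' : ∀ f ∈ M, v ∉ f := fun f hf hvf =>
      hvM (Finset.mem_biUnion.2 ⟨f, hf, mem_edgeVerts.2 hvf⟩)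
    obtain ⟨w, rfl⟩ := Sym2.mem_iff_exists.1 (mem_edgeVerts.1 hve)
    rcases pathLemma (n + 1) M N hn hMd hNd hM hN hdisj v w heN hvM' with
      ⟨M', N', hun, hd, hm1, hm2, hc1, hc2, -, -⟩ | ⟨P, Q, hP, hQ, heQ, hcPQ, hsep⟩
    · exact ⟨M', N', hun, hd, hm1, hm2, hc1, hc2⟩
    · have hPM : P.card ≤ M.card := Finset.card_le_card hP
      have hQN : Q.card ≤ N.card := Finset.card_le_card hQ
      have hQ1 : 1 ≤ Q.card := Finset.card_pos.2 ⟨_, heQ⟩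
      have hcMP : (M \ P).card = M.card - P.card := Finset.card_sdiff_of_subset hP
      have hcNQ : (N \ Q).card = N.card - Q.card := Finset.card_sdiff_of_subset hQ
      have hmeas : (M \ P).card + (N \ Q).card ≤ n := by omega
      have hlt' : (M \ P).card < (N \ Q).card := by omega
      have hMPsub : M \ P ⊆ M := Finset.sdiff_subset
      have hNQsub : N \ Q ⊆ N := Finset.sdiff_subset
      obtain ⟨A₀, B₀, hun₀, hd₀, hmA₀, hmB₀, hcA₀, hcB₀⟩ :=
        ih (M \ P) (N \ Q) hmeas (fun g hg => hMd g (hMPsub hg)) (fun g hg => hNd g (hNQsub hg))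
          (isMatch_subset hMPsub hM) (isMatch_subset hNQsub hN)
          (Finset.disjoint_of_subset_left hMPsub (Finset.disjoint_of_subset_right hNQsub hdisj))
          hlt'
      have hsubAB : ∀ g, g ∈ A₀ ∨ g ∈ B₀ → g ∈ (M \ P) ∪ (N \ Q) := by
        intro g hg
        rw [← Finset.mem_union, hun₀] at hg
        exact hg
      have hdA₀P : Disjoint A₀ P := by
        rw [Finset.disjoint_left]
        intro a ha haP
        rcases Finset.mem_union.1 (hsubAB a (Or.inl ha)) with h | h
        · exact (Finset.mem_sdiff.1 h).2 haP
        · exact Finset.disjoint_left.1 hdisj (hP haP) (Finset.mem_sdiff.1 h).1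
      have hdB₀Q : Disjoint B₀ Q := by
        rw [Finset.disjoint_left]
        intro a ha haQ
        rcases Finset.mem_union.1 (hsubAB a (Or.inr ha)) with h | h
        · exact Finset.disjoint_left.1 hdisj (Finset.mem_sdiff.1 h).1 (hQ haQ)
        · exact (Finset.mem_sdiff.1 h).2 haQ
      have hdA₀Q : Disjoint A₀ Q := by
        rw [Finset.disjoint_left]
        intro a ha haQ
        rcases Finset.mem_union.1 (hsubAB a (Or.inl ha)) with h | h
        · exact Finset.disjoint_left.1 hdisj (Finset.mem_sdiff.1 h).1 (hQ haQ)
        · exact (Finset.mem_sdiff.1 h).2 haQ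
      have hdB₀P : Disjoint B₀ P := by
        rw [Finset.disjoint_left]
        intro a ha haP
        rcases Finset.mem_union.1 (hsubAB a (Or.inr ha)) with h | h
        · exact (Finset.mem_sdiff.1 h).2 haP
        · exact Finset.disjoint_left.1 hdisj (hP haP) (Finset.mem_sdiff.1 h).1
      have hdPQ : Disjoint P Q :=
        Finset.disjoint_of_subset_left hP (Finset.disjoint_of_subset_right hQ hdisj)
      refine ⟨A₀ ∪ P, B₀ ∪ Q, ?_, ?_, ?_, ?_, ?_, ?_⟩
      · ext a
        have h1' : a ∈ A₀ ∨ a ∈ B₀ ↔ a ∈ M \ P ∨ a ∈ N \ Q := by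
          rw [← Finset.mem_union, ← Finset.mem_union, hun₀]
        simp only [Finset.mem_union, Finset.mem_sdiff] at h1' ⊢
        constructor
        · rintro ((h | h) | h | h)
          · rcases h1'.1 (Or.inl h) with h | h
            exacts [Or.inl h.1, Or.inr h.1]
          · exact Or.inl (hP h)
          · rcases h1'.1 (Or.inr h) with h | h
            exacts [Or.inl h.1, Or.inr h.1]
          · exact Or.inr (hQ h)
        · rintro (h | h)
          · by_cases hp : a ∈ P
            · exact Or.inl (Or.inr hp)
            · rcases h1'.2 (Or.inl ⟨h, hp⟩) with h' | h'
              exacts [Or.inl (Or.inl h'), Or.inr (Or.inl h')]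
          · by_cases hq : a ∈ Q
            · exact Or.inr (Or.inr hq)
            · rcases h1'.2 (Or.inr ⟨h, hq⟩) with h' | h'
              exacts [Or.inl (Or.inl h'), Or.inr (Or.inl h')]
      · rw [Finset.disjoint_union_left, Finset.disjoint_union_right, Finset.disjoint_union_right]
        exact ⟨⟨hd₀, hdA₀Q⟩, hdB₀P.symm, hdPQ⟩
      · refine isMatch_union hmA₀ (isMatch_subset hP hM) ?_
        rintro x ⟨g, hg, hxg⟩ f hf hxf
        exact hsep x ⟨f, Finset.mem_union_left _ hf, hxf⟩ g (hsubAB g (Or.inl hg)) hxg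
      · refine isMatch_union hmB₀ (isMatch_subset hQ hN) ?_
        rintro x ⟨g, hg, hxg⟩ f hf hxf
        exact hsep x ⟨f, Finset.mem_union_right _ hf, hxf⟩ g (hsubAB g (Or.inr hg)) hxg
      · rw [Finset.card_union_of_disjoint hdA₀P]
        have := Finset.card_sdiff_add_card_eq_card hP
        omega
      · rw [Finset.card_union_of_disjoint hdB₀Q]
        have := Finset.card_sdiff_add_card_eq_card hQ
        omega

lemma mainAux {V : Type*} [Fintype V] [DecidableEq V] (G : SimpleGraph V) [DecidableRel G.Adj]
    (k : ℕ) (hm : 3 * k ≤ G.edgeFinset.card) (d : ℕ) :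
    ∀ C : Fin k → Finset (Sym2 V),
    (∑ l, (3 - (C l).card)) ≤ d →
    (∀ l, C l ⊆ G.edgeFinset) → (∀ l m, l ≠ m → Disjoint (C l) (C m)) →
    (Finset.univ.biUnion C = G.edgeFinset) → (∀ l, IsMatch (C l)) →
    ∃ C' : Fin k → Finset (Sym2 V),
      (∀ l, C' l ⊆ G.edgeFinset) ∧ (∀ l m, l ≠ m → Disjoint (C' l) (C' m)) ∧
      (Finset.univ.biUnion C' = G.edgeFinset) ∧ (∀ l, IsMatch (C' l)) ∧
      (∀ l, 3 ≤ (C' l).card) := by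
  induction d with
  | zero =>
    intro C hd hsub hdisj hcover hmatch
    refine ⟨C, hsub, hdisj, hcover, hmatch, fun l => ?_⟩
    have h0 : (3 - (C l).card) = 0 :=
      Finset.sum_eq_zero_iff.1 (Nat.le_zero.1 hd) l (Finset.mem_univ l)
    omega
  | succ d ihd =>
    intro C hd hsub hdisj hcover hmatch
    by_cases hall : ∀ l, 3 ≤ (C l).card
    · exact ⟨C, hsub, hdisj, hcover, hmatch, hall⟩
    push_neg at hall
    obtain ⟨i, hi⟩ := hall
    have hi2 : (C i).card < 3 := by omega
    have hsum : ∑ l, (C l).card = G.edgeFinset.card := by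
      rw [← hcover, Finset.card_biUnion (fun l _ m _ hlm => hdisj l m hlm)]
    have hk : 1 ≤ k := i.pos
    -- find a big class j
    have hj : ∃ j, 4 ≤ (C j).card := by
      by_contra hno
      push_neg at hno
      have h1 : ∑ l, (C l).card = (C i).card + ∑ l ∈ Finset.univ.erase i, (C l).card :=
        (Finset.add_sum_erase _ _ (Finset.mem_univ i)).symm
      have h2 : ∑ l ∈ Finset.univ.erase i, (C l).card ≤ (Finset.univ.erase i).card * 3 := by
        refine Finset.sum_le_card_nsmul _ _ 3 fun l _ => by
          have := hno l; omega
      have h3 : (Finset.univ.erase i).card = k - 1 := by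
        rw [Finset.card_erase_of_mem (Finset.mem_univ i), Finset.card_univ, Fintype.card_fin]
      omega
    obtain ⟨j, hj4⟩ := hj
    have hij : i ≠ j := fun h => by rw [h] at hi2; omega
    have hnd : ∀ l, ∀ e ∈ C l, ¬ e.IsDiag := fun l e hel =>
      G.not_isDiag_of_mem_edgeSet (SimpleGraph.mem_edgeFinset.1 (hsub l hel))
    obtain ⟨A, B, hun, hdAB, hmA, hmB, hcA, hcB⟩ :=
      gainLemma ((C i).card + (C j).card) (C i) (C j) le_rfl (hnd i) (hnd j)
        (hmatch i) (hmatch j) (hdisj i j hij) (by omega)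
    set D : Fin k → Finset (Sym2 V) :=
      Function.update (Function.update C i A) j B with hDdef
    have hDi : D i = A := by
      rw [hDdef, Function.update_of_ne hij, Function.update_self]
    have hDj : D j = B := by
      rw [hDdef, Function.update_self]
    have hDl : ∀ l, l ≠ i → l ≠ j → D l = C l := fun l hli hlj => by
      rw [hDdef, Function.update_of_ne hlj, Function.update_of_ne hli]
    have hAsub : A ⊆ C i ∪ C j := fun a ha => by
      rw [← hun]; exact Finset.mem_union_left _ ha
    have hBsub : B ⊆ C i ∪ C j := fun a ha => by
      rw [← hun]; exact Finset.mem_union_right _ ha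
    have hCij_sub : C i ∪ C j ⊆ G.edgeFinset := Finset.union_subset (hsub i) (hsub j)
    have hdisj_other : ∀ m, m ≠ i → m ≠ j → Disjoint (C i ∪ C j) (C m) := fun m h1 h2 =>
      Finset.disjoint_union_left.2 ⟨hdisj i m (Ne.symm h1), hdisj j m (Ne.symm h2)⟩
    -- new deficiency sum
    have hjmem : j ∈ Finset.univ.erase i := Finset.mem_erase.2 ⟨Ne.symm hij, Finset.mem_univ j⟩
    have esum : ∀ f : Fin k → ℕ, ∑ l, f l =
        f i + (f j + ∑ l ∈ (Finset.univ.erase i).erase j, f l) := by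
      intro f
      rw [Finset.add_sum_erase _ f hjmem, Finset.add_sum_erase _ f (Finset.mem_univ i)]
    have hrest : ∑ l ∈ (Finset.univ.erase i).erase j, (3 - (D l).card) =
        ∑ l ∈ (Finset.univ.erase i).erase j, (3 - (C l).card) := by
      refine Finset.sum_congr rfl fun l hl => ?_
      have h1 := (Finset.mem_erase.1 hl).1
      have h2 := (Finset.mem_erase.1 (Finset.mem_erase.1 hl).2).1
      rw [hDl l h2 h1]
    have hd' : ∑ l, (3 - (D l).card) ≤ d := by
      have e1 := esum (fun l => 3 - (D l).card)
      have e2 := esum (fun l => 3 - (C l).card)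
      rw [hDi, hDj] at e1
      omega
    refine ihd D hd' ?_ ?_ ?_ ?_
    · intro l
      by_cases hli : l = i
      · rw [hli, hDi]; exact hAsub.trans hCij_sub
      · by_cases hlj : l = j
        · rw [hlj, hDj]; exact hBsub.trans hCij_sub
        · rw [hDl l hli hlj]; exact hsub l
    · intro l m hlm
      by_cases hli : l = i
      · by_cases hmj : m = j
        · rw [hli, hmj, hDi, hDj]; exact hdAB
        · have hmi : m ≠ i := fun h => hlm (hli.trans h.symm)
          rw [hli, hDi, hDl m hmi hmj]
          exact Finset.disjoint_of_subset_left hAsub (hdisj_other m hmi hmj)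
      · by_cases hlj : l = j
        · by_cases hmi : m = i
          · rw [hlj, hmi, hDj, hDi]; exact hdAB.symm
          · have hmj : m ≠ j := fun h => hlm (hlj.trans h.symm)
            rw [hlj, hDj, hDl m hmi hmj]
            exact Finset.disjoint_of_subset_left hBsub (hdisj_other m hmi hmj)
        · rw [hDl l hli hlj]
          by_cases hmi : m = i
          · rw [hmi, hDi]
            exact (Finset.disjoint_of_subset_left hAsub (hdisj_other l hli hlj)).symm
          · by_cases hmj : m = j
            · rw [hmj, hDj]
              exact (Finset.disjoint_of_subset_left hBsub (hdisj_other l hli hlj)).symm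
            · rw [hDl m hmi hmj]; exact hdisj l m hlm
    · ext a
      simp only [Finset.mem_biUnion, Finset.mem_univ, true_and]
      constructor
      · rintro ⟨l, hl⟩
        by_cases hli : l = i
        · rw [hli, hDi] at hl; exact hCij_sub (hAsub hl)
        · by_cases hlj : l = j
          · rw [hlj, hDj] at hl; exact hCij_sub (hBsub hl)
          · rw [hDl l hli hlj] at hl; exact hsub l hl
      · intro ha
        have ha' : a ∈ Finset.univ.biUnion C := by rw [hcover]; exact ha
        obtain ⟨l, -, hl⟩ := Finset.mem_biUnion.1 ha'
        by_cases hli : l = i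
        · have hab : a ∈ A ∪ B := by rw [hun]; exact Finset.mem_union_left _ (hli ▸ hl)
          rcases Finset.mem_union.1 hab with h | h
          · exact ⟨i, by rw [hDi]; exact h⟩
          · exact ⟨j, by rw [hDj]; exact h⟩
        · by_cases hlj : l = j
          · have hab : a ∈ A ∪ B := by rw [hun]; exact Finset.mem_union_right _ (hlj ▸ hl)
            rcases Finset.mem_union.1 hab with h | h
            · exact ⟨i, by rw [hDi]; exact h⟩
            · exact ⟨j, by rw [hDj]; exact h⟩
          · exact ⟨l, by rw [hDl l hli hlj]; exact hl⟩
    · intro l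
      by_cases hli : l = i
      · rw [hli, hDi]; exact hmA
      · by_cases hlj : l = j
        · rw [hlj, hDj]; exact hmB
        · rw [hDl l hli hlj]; exact hmatch l

end Rebal


/-- If a graph `G` has a proper edge colouring with `k` colour classes (a partition of the edge
set into `k` matchings) and at least `3k` edges, then `G` has a proper edge colouring with `k`
colour classes each containing at least `3` edges. -/
theorem rebalance_colour_classes {V : Type*} [Fintype V] [DecidableEq V]
    (G : SimpleGraph V) [DecidableRel G.Adj] (k : ℕ) (C : Fin k → Finset (Sym2 V))
    (hsub : ∀ i, C i ⊆ G.edgeFinset)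
    (hdisj : ∀ i j, i ≠ j → Disjoint (C i) (C j))
    (hcover : Finset.univ.biUnion C = G.edgeFinset)
    (hmatch : ∀ i, ∀ e₁ ∈ C i, ∀ e₂ ∈ C i, e₁ ≠ e₂ → ∀ x, x ∈ e₁ → x ∉ e₂)
    (hm : 3 * k ≤ G.edgeFinset.card) :
    ∃ C' : Fin k → Finset (Sym2 V),
      (∀ i, C' i ⊆ G.edgeFinset) ∧
      (∀ i j, i ≠ j → Disjoint (C' i) (C' j)) ∧
      (Finset.univ.biUnion C' = G.edgeFinset) ∧
      (∀ i, ∀ e₁ ∈ C' i, ∀ e₂ ∈ C' i, e₁ ≠ e₂ → ∀ x, x ∈ e₁ → x ∉ e₂) ∧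
      (∀ i, 3 ≤ (C' i).card) := by
  obtain ⟨C', h1, h2, h3, h4, h5⟩ :=
    Rebal.mainAux G k hm (∑ l, (3 - (C l).card)) C le_rfl hsub hdisj hcover hmatch
  exact ⟨C', h1, h2, h3, h4, h5⟩
end

section
/- If G is a graph on n vertices whose vertex set decomposes as a connected component on 3 vertices (either K_3 or the path P_3) together with a component containing a universal-in-component vertex r of degree n−4, and m ≥ 7n, then G is antimagic. -/
/-- If a graph `G` on `n` vertices decomposes into a connected component on `3` vertices that is
either a `K₃` or a path `P₃`, together with a component containing a vertex `r` of degree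
`n - 4` adjacent to every other vertex outside the small component, and `m ≥ 7n`, then `G` is
antimagic. -/
theorem antimagic_of_triangle_or_path_component {V : Type*} [Fintype V] [DecidableEq V]
    (G : SimpleGraph V) [DecidableRel G.Adj] (a b c r : V)
    (hdist : a ≠ b ∧ a ≠ c ∧ b ≠ c ∧ r ≠ a ∧ r ≠ b ∧ r ≠ c)
    (hcomp : ∀ u v, G.Adj u v → (u ∈ ({a, b, c} : Set V) ↔ v ∈ ({a, b, c} : Set V)))
    (hsmall : (G.Adj a b ∧ G.Adj b c ∧ G.Adj a c) ∨ (G.Adj a b ∧ G.Adj b c ∧ ¬ G.Adj a c))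
    (hr : G.degree r = Fintype.card V - 4)
    (huniv : ∀ v, v ∉ ({a, b, c} : Set V) → v ≠ r → G.Adj r v)
    (hm : 7 * Fintype.card V ≤ G.edgeFinset.card) :
    G.IsAntimagic := by
  classical
  obtain ⟨hab, hac, hbc, hra, hrb, hrc⟩ := hdist
  set n := Fintype.card V with hndef
  set m := G.edgeFinset.card with hmdef
  have hadjab : G.Adj a b := by rcases hsmall with ⟨h, _, _⟩ | ⟨h, _, _⟩ <;> exact h
  have hadjbc : G.Adj b c := by rcases hsmall with ⟨_, h, _⟩ | ⟨_, h, _⟩ <;> exact h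
  have hrS : r ∉ ({a, b, c} : Set V) := by
    simp only [Set.mem_insert_iff, Set.mem_singleton_iff]
    push_neg
    exact ⟨hra, hrb, hrc⟩
  -- basic size facts
  have hnpos : 0 < n := Fintype.card_pos_iff.mpr ⟨a⟩
  have hn15 : 15 ≤ n := by
    have h1 : m ≤ n.choose 2 := G.card_edgeFinset_le_card_choose_two
    rw [Nat.choose_two_right] at h1
    have h2 : 14 * n ≤ n * (n - 1) := by
      set M := n * (n - 1) with hM
      omega
    by_contra hcon
    push_neg at hcon
    have h4 : n * (n - 1) ≤ n * 13 := Nat.mul_le_mul_left n (by omega)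
    set M := n * (n - 1) with hM
    set M' := n * 13 with hM'
    omega
  -- the neighbourhood of r
  set T := G.neighborFinset r with hTdef
  set t := T.card with htdef
  have htdeg : t = G.degree r := rfl
  have ht4 : t = n - 4 := htdeg.trans hr
  have hmemT : ∀ v, v ∈ T ↔ v ∉ ({a, b, c} : Set V) ∧ v ≠ r := by
    intro v
    constructor
    · intro hv
      rw [hTdef, SimpleGraph.mem_neighborFinset] at hv
      refine ⟨fun hvS => hrS ((hcomp r v hv).2 hvS), fun h => G.irrefl (h ▸ hv)⟩
    · intro ⟨h1, h2⟩
      rw [hTdef, SimpleGraph.mem_neighborFinset]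
      exact huniv v h1 h2
  have htn : t ≤ n := by
    rw [htdef, hndef]
    exact Finset.card_le_card (Finset.subset_univ T)
  have ht11 : 11 ≤ t := by omega
  have hmt : 6 * n ≤ m - t := by omega
  have htm : t ≤ m := by omega
  -- edge classes
  set ES := G.edgeFinset.filter (fun e => a ∈ e ∨ b ∈ e ∨ c ∈ e) with hESdef
  set ER := G.edgeFinset.filter (fun e => r ∈ e) with hERdef
  set E0 := G.edgeFinset.filter (fun e => ¬(a ∈ e ∨ b ∈ e ∨ c ∈ e) ∧ r ∉ e) with hE0def
  -- small edges classification
  have hedge_small : ∀ e ∈ G.edgeFinset, (a ∈ e ∨ b ∈ e ∨ c ∈ e) →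
      e = s(a,b) ∨ e = s(b,c) ∨ (e = s(a,c) ∧ G.Adj a c) := by
    intro e
    induction e using Sym2.ind with
    | _ x y =>
      intro he hmem
      rw [SimpleGraph.mem_edgeFinset, SimpleGraph.mem_edgeSet] at he
      have hone : x ∈ ({a,b,c} : Set V) ∨ y ∈ ({a,b,c} : Set V) := by
        rcases hmem with h | h | h <;> rw [Sym2.mem_iff] at h <;> rcases h with rfl | rfl <;>
          simp
      have hx : x ∈ ({a,b,c} : Set V) := hone.elim id (fun h => (hcomp x y he).2 h)
      have hy : y ∈ ({a,b,c} : Set V) := (hcomp x y he).1 hx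
      simp only [Set.mem_insert_iff, Set.mem_singleton_iff] at hx hy
      rcases hx with rfl | rfl | rfl <;> rcases hy with rfl | rfl | rfl <;>
        first
        | exact (G.irrefl he).elim
        | exact Or.inl rfl
        | exact Or.inl Sym2.eq_swap
        | exact Or.inr (Or.inl rfl)
        | exact Or.inr (Or.inl Sym2.eq_swap)
        | exact Or.inr (Or.inr ⟨rfl, he⟩)
        | exact Or.inr (Or.inr ⟨Sym2.eq_swap, he.symm⟩)
  have hER_mem : ∀ e, e ∈ ER ↔ ∃ w ∈ T, e = s(r, w) := by
    intro e
    constructor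
    · intro he
      rw [hERdef, Finset.mem_filter] at he
      obtain ⟨he1, he2⟩ := he
      refine ⟨Sym2.Mem.other' he2, ?_, (Sym2.other_spec' he2).symm⟩
      rw [hTdef, SimpleGraph.mem_neighborFinset, ← SimpleGraph.mem_edgeSet,
        Sym2.other_spec' he2]
      exact SimpleGraph.mem_edgeFinset.1 he1
    · rintro ⟨w, hw, rfl⟩
      rw [hTdef, SimpleGraph.mem_neighborFinset] at hw
      rw [hERdef, Finset.mem_filter, SimpleGraph.mem_edgeFinset, SimpleGraph.mem_edgeSet]
      exact ⟨hw, by simp⟩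
  have hr_not_small : ∀ e ∈ ER, ¬(a ∈ e ∨ b ∈ e ∨ c ∈ e) := by
    intro e he
    obtain ⟨w, hw, rfl⟩ := (hER_mem e).1 he
    have hwS := ((hmemT w).1 hw).1
    simp only [Sym2.mem_iff]
    push_neg
    exact ⟨⟨Ne.symm hra, fun h => hwS (by rw [← h]; simp)⟩,
      ⟨Ne.symm hrb, fun h => hwS (by rw [← h]; simp)⟩,
      ⟨Ne.symm hrc, fun h => hwS (by rw [← h]; simp)⟩⟩
  -- cardinalities
  have hincR : G.incidenceFinset r = ER := by
    rw [hERdef, SimpleGraph.incidenceFinset_eq_filter]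
  have hERcard : ER.card = t := by
    rw [← hincR, SimpleGraph.card_incidenceFinset_eq_degree]
    exact htdeg.symm
  -- the two cases for the small component
  have hne1 : s(b,c) ≠ s(a,b) := by
    intro hcontra
    rw [Sym2.eq_iff] at hcontra
    rcases hcontra with ⟨h1, _⟩ | ⟨_, h2⟩
    · exact hab h1.symm
    · exact hac h2.symm
  have hne2 : s(a,c) ≠ s(a,b) := by
    intro hcontra
    rw [Sym2.eq_iff] at hcontra
    rcases hcontra with ⟨_, h1⟩ | ⟨h1, h2⟩
    · exact hbc h1.symm
    · exact hab h1
  have hne3 : s(a,c) ≠ s(b,c) := by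
    intro hcontra
    rw [Sym2.eq_iff] at hcontra
    rcases hcontra with ⟨h1, _⟩ | ⟨_, h2⟩
    · exact hab h1
    · exact hbc h2.symm
  have hESp3 : ¬ G.Adj a c → ES = {s(a,b), s(b,c)} := by
    intro hnac
    rw [hESdef]
    ext e
    rw [Finset.mem_filter]
    constructor
    · rintro ⟨he1, he2⟩
      rcases hedge_small e he1 he2 with rfl | rfl | ⟨rfl, h⟩
      · simp
      · simp
      · exact absurd h hnac
    · intro he
      simp only [Finset.mem_insert, Finset.mem_singleton] at he
      rcases he with rfl | rfl
      · exact ⟨SimpleGraph.mem_edgeFinset.2 hadjab, Or.inl (by simp)⟩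
      · exact ⟨SimpleGraph.mem_edgeFinset.2 hadjbc, Or.inr (Or.inl (by simp))⟩
  have hESk3 : G.Adj a c → ES = {s(a,b), s(b,c), s(a,c)} := by
    intro hadjac
    rw [hESdef]
    ext e
    rw [Finset.mem_filter]
    constructor
    · rintro ⟨he1, he2⟩
      rcases hedge_small e he1 he2 with rfl | rfl | ⟨rfl, h⟩ <;> simp
    · intro he
      simp only [Finset.mem_insert, Finset.mem_singleton] at he
      rcases he with rfl | rfl | rfl
      · exact ⟨SimpleGraph.mem_edgeFinset.2 hadjab, Or.inl (by simp)⟩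
      · exact ⟨SimpleGraph.mem_edgeFinset.2 hadjbc, Or.inr (Or.inl (by simp))⟩
      · exact ⟨SimpleGraph.mem_edgeFinset.2 hadjac, Or.inl (by simp)⟩
  set k := ES.card with hkdef
  have hcase : (¬ G.Adj a c ∧ k = 2) ∨ (G.Adj a c ∧ k = 3) := by
    by_cases hadjac : G.Adj a c
    · refine Or.inr ⟨hadjac, ?_⟩
      rw [hkdef, hESk3 hadjac]
      rw [Finset.card_insert_of_notMem (by simp [hne1.symm, hne2.symm, eq_comm]),
        Finset.card_insert_of_notMem (by simp [hne3.symm, eq_comm]),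
        Finset.card_singleton]
    · refine Or.inl ⟨hadjac, ?_⟩
      rw [hkdef, hESp3 hadjac]
      rw [Finset.card_insert_of_notMem (by simp [hne1.symm, eq_comm]),
        Finset.card_singleton]
  have hk23 : k = 2 ∨ k = 3 := by rcases hcase with ⟨_, h⟩ | ⟨_, h⟩ <;> omega
  have hpart : k + (t + E0.card) = m := by
    have h1 := Finset.card_filter_add_card_filter_not
      (s := G.edgeFinset) (p := fun e => a ∈ e ∨ b ∈ e ∨ c ∈ e)
    have h2 := Finset.card_filter_add_card_filter_not
      (s := G.edgeFinset.filter (fun e => ¬(a ∈ e ∨ b ∈ e ∨ c ∈ e))) (p := fun e => r ∈ e)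
    have h3 : (G.edgeFinset.filter (fun e => ¬(a ∈ e ∨ b ∈ e ∨ c ∈ e))).filter
        (fun e => r ∈ e) = ER := by
      ext e
      simp only [Finset.mem_filter, hERdef]
      constructor
      · rintro ⟨⟨he1, _⟩, he3⟩
        exact ⟨he1, he3⟩
      · rintro ⟨he1, he2⟩
        exact ⟨⟨he1, hr_not_small e ((Finset.mem_filter).2 ⟨he1, he2⟩)⟩, he2⟩
    have h4 : (G.edgeFinset.filter (fun e => ¬(a ∈ e ∨ b ∈ e ∨ c ∈ e))).filter
        (fun e => ¬ r ∈ e) = E0 := by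
      rw [Finset.filter_filter, hE0def]
    rw [h3, h4, hERcard] at h2
    rw [← hESdef] at h1
    omega
  have hE0card : E0.card = m - t - k := by omega
  -- the labelling of E0
  have hex0 : ∃ f0 : Sym2 V → ℕ, Set.InjOn f0 ↑E0 ∧
      ∀ e ∈ E0, f0 e ∈ Finset.Icc (k+1) (m-t) := by
    have hIcc0card : E0.card = (Finset.Icc (k+1) (m-t)).card := by
      rw [Nat.card_Icc]; omega
    set eqv0 := Finset.equivOfCardEq hIcc0card with heqv0
    refine ⟨fun e => if h : e ∈ E0 then ((eqv0 ⟨e, h⟩ : ℕ)) else 0, ?_, ?_⟩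
    · intro e1 h1 e2 h2 hfe
      rw [Finset.mem_coe] at h1 h2
      simp only [dif_pos h1, dif_pos h2] at hfe
      have h5 : eqv0 ⟨e1, h1⟩ = eqv0 ⟨e2, h2⟩ := Subtype.ext hfe
      exact Subtype.ext_iff.1 (eqv0.injective h5)
    · intro e he
      simp only [dif_pos he]
      exact (eqv0 ⟨e, he⟩).2
  obtain ⟨f0, hf0inj, hf0mem⟩ := hex0
  -- partial sums
  set sv : V → ℕ := fun v => ∑ e ∈ E0.filter (fun e => v ∈ e), f0 e with hsvdef
  -- the rank labelling on T
  have hexg : ∃ gr : V → ℕ, (∀ v ∈ T, gr v ∈ Finset.Icc (m-t+1) m) ∧ Set.InjOn gr ↑T ∧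
      T.image gr = Finset.Icc (m-t+1) m ∧
      (∀ u ∈ T, ∀ v ∈ T, u ≠ v → sv u + gr u ≠ sv v + gr v) := by
    set enc := Fintype.equivFin V with hencdef
    set K : V → ℕ := fun v => n * sv v + (enc v : ℕ) with hKdef
    have hencn : ∀ v : V, (enc v : ℕ) < n := fun v => (enc v).2
    have hKinj : Function.Injective K := by
      intro u v huv
      have h1 := hencn u
      have h2 := hencn v
      simp only [hKdef] at huv
      have hsvuv : sv u = sv v := by
        rcases Nat.lt_trichotomy (sv u) (sv v) with h | h | h
        · have := Nat.mul_le_mul_left n h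
          have h4 : n * (sv u + 1) ≤ n * sv v := Nat.mul_le_mul_left n h
          rw [Nat.mul_add, Nat.mul_one] at h4
          omega
        · exact h
        · have h4 : n * (sv v + 1) ≤ n * sv u := Nat.mul_le_mul_left n h
          rw [Nat.mul_add, Nat.mul_one] at h4
          omega
      rw [hsvuv] at huv
      have h3 : (enc u : ℕ) = (enc v : ℕ) := by omega
      exact enc.injective (Fin.ext h3)
    have hKmono : ∀ u v, K u < K v → sv u ≤ sv v := by
      intro u v huv
      by_contra h
      push_neg at h
      have h1 := hencn v
      have h4 : n * (sv v + 1) ≤ n * sv u := Nat.mul_le_mul_left n h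
      rw [Nat.mul_add, Nat.mul_one] at h4
      simp only [hKdef] at huv
      omega
    set T' := T.image K with hT'def
    have hT'card : T'.card = t := Finset.card_image_of_injective _ hKinj
    set ord := T'.orderIsoOfFin hT'card with horddef
    refine ⟨fun v => if h : K v ∈ T' then m - t + 1 + ((ord.symm ⟨K v, h⟩ : Fin t) : ℕ) else 0,
      ?_, ?_, ?_, ?_⟩
    · intro v hv
      have h : K v ∈ T' := Finset.mem_image_of_mem _ hv
      have h2 : ((ord.symm ⟨K v, h⟩ : Fin t) : ℕ) < t := (ord.symm ⟨K v, h⟩).2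
      simp only [dif_pos h]
      rw [Finset.mem_Icc]
      omega
    · intro u hu v hv huv
      rw [Finset.mem_coe] at hu hv
      have h1 : K u ∈ T' := Finset.mem_image_of_mem _ hu
      have h2 : K v ∈ T' := Finset.mem_image_of_mem _ hv
      simp only [dif_pos h1, dif_pos h2] at huv
      have h3 : ord.symm ⟨K u, h1⟩ = ord.symm ⟨K v, h2⟩ := by
        have := Nat.add_left_cancel huv
        exact Fin.ext this
      have h4 : K u = K v := Subtype.ext_iff.1 (ord.symm.injective h3)
      exact hKinj h4
    · apply Finset.eq_of_subset_of_card_le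
      · intro j hj
        obtain ⟨v, hv, rfl⟩ := Finset.mem_image.1 hj
        have h : K v ∈ T' := Finset.mem_image_of_mem _ hv
        have h2 : ((ord.symm ⟨K v, h⟩ : Fin t) : ℕ) < t := (ord.symm ⟨K v, h⟩).2
        simp only [dif_pos h]
        rw [Finset.mem_Icc]
        omega
      · rw [Nat.card_Icc]
        have hinj : Set.InjOn (fun v => if h : K v ∈ T' then
            m - t + 1 + ((ord.symm ⟨K v, h⟩ : Fin t) : ℕ) else 0) ↑T := by
          intro u hu v hv huv
          rw [Finset.mem_coe] at hu hv
          have h1 : K u ∈ T' := Finset.mem_image_of_mem _ hu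
          have h2 : K v ∈ T' := Finset.mem_image_of_mem _ hv
          simp only [dif_pos h1, dif_pos h2] at huv
          have h3 : ord.symm ⟨K u, h1⟩ = ord.symm ⟨K v, h2⟩ :=
            Fin.ext (Nat.add_left_cancel huv)
          exact hKinj (Subtype.ext_iff.1 (ord.symm.injective h3))
        rw [Finset.card_image_of_injOn hinj]
        omega
    · intro u hu v hv huv
      have hKne : K u ≠ K v := fun h => huv (hKinj h)
      have hstrict : ∀ x ∈ T, ∀ y ∈ T, K x < K y →
          (if h : K x ∈ T' then m - t + 1 + ((ord.symm ⟨K x, h⟩ : Fin t) : ℕ) else 0) <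
          (if h : K y ∈ T' then m - t + 1 + ((ord.symm ⟨K y, h⟩ : Fin t) : ℕ) else 0) := by
        intro x hx y hy hxy
        have h1 : K x ∈ T' := Finset.mem_image_of_mem _ hx
        have h2 : K y ∈ T' := Finset.mem_image_of_mem _ hy
        simp only [dif_pos h1, dif_pos h2]
        have h3 : ord.symm ⟨K x, h1⟩ < ord.symm ⟨K y, h2⟩ :=
          ord.symm.strictMono (Subtype.mk_lt_mk.mpr hxy)
        have h4 : ((ord.symm ⟨K x, h1⟩ : Fin t) : ℕ) < ((ord.symm ⟨K y, h2⟩ : Fin t) : ℕ) := h3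
        omega
      simp only []
      rcases hKne.lt_or_gt with h | h
      · have h1 := hKmono u v h
        have h2 := hstrict u hu v hv h
        omega
      · have h1 := hKmono v u h
        have h2 := hstrict v hv u hu h
        omega
  obtain ⟨gr, hgr_mem, hgr_inj, hgr_img, hgr_sums⟩ := hexg
  -- the labelling
  set f : Sym2 V → ℕ := fun e =>
    if e = s(a,b) then 1 else if e = s(b,c) then 2 else if e = s(a,c) then 3
    else if h : r ∈ e then gr (Sym2.Mem.other' h) else f0 e with hfdef
  -- values of f
  have hfab : f s(a,b) = 1 := by simp [hfdef]
  have hfbc : f s(b,c) = 2 := by rw [hfdef]; beta_reduce; rw [if_neg hne1, if_pos rfl]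
  have hfac : f s(a,c) = 3 := by
    rw [hfdef]; beta_reduce; rw [if_neg hne2, if_neg hne3, if_pos rfl]
  have hf_r : ∀ w ∈ T, f s(r,w) = gr w := by
    intro w hw
    have hwS := ((hmemT w).1 hw).1
    have hn1 : s(r,w) ≠ s(a,b) := by
      intro hcontra
      rw [Sym2.eq_iff] at hcontra
      rcases hcontra with ⟨h1, _⟩ | ⟨h1, _⟩
      · exact hra h1
      · exact hrb h1
    have hn2 : s(r,w) ≠ s(b,c) := by
      intro hcontra
      rw [Sym2.eq_iff] at hcontra
      rcases hcontra with ⟨h1, _⟩ | ⟨h1, _⟩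
      · exact hrb h1
      · exact hrc h1
    have hn3 : s(r,w) ≠ s(a,c) := by
      intro hcontra
      rw [Sym2.eq_iff] at hcontra
      rcases hcontra with ⟨h1, _⟩ | ⟨h1, _⟩
      · exact hra h1
      · exact hrc h1
    have hrm : r ∈ s(r,w) := by simp
    rw [hfdef]; beta_reduce
    rw [if_neg hn1, if_neg hn2, if_neg hn3, dif_pos hrm]
    congr 1
    have hspec := Sym2.other_spec' hrm
    rwa [Sym2.congr_right] at hspec
  have hf_e0 : ∀ e ∈ E0, f e = f0 e := by
    intro e he
    rw [hE0def, Finset.mem_filter] at he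
    obtain ⟨he1, hP, hre⟩ := he
    have h1 : e ≠ s(a,b) := by rintro rfl; exact hP (Or.inl (by simp))
    have h2 : e ≠ s(b,c) := by rintro rfl; exact hP (Or.inr (Or.inl (by simp)))
    have h3 : e ≠ s(a,c) := by rintro rfl; exact hP (Or.inl (by simp))
    rw [hfdef]; beta_reduce
    rw [if_neg h1, if_neg h2, if_neg h3, dif_neg hre]
  -- ranges of f on the three classes
  have hfES_range : ∀ e ∈ ES, 1 ≤ f e ∧ f e ≤ k := by
    intro e he
    rw [hESdef, Finset.mem_filter] at he
    rcases hcase with ⟨hnac, hk⟩ | ⟨hadjac, hk⟩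
    · rcases hedge_small e he.1 he.2 with rfl | rfl | ⟨rfl, h⟩
      · rw [hfab]; omega
      · rw [hfbc]; omega
      · exact absurd h hnac
    · rcases hedge_small e he.1 he.2 with rfl | rfl | ⟨rfl, h⟩
      · rw [hfab]; omega
      · rw [hfbc]; omega
      · rw [hfac]; omega
  have hfER_range : ∀ e ∈ ER, m - t + 1 ≤ f e ∧ f e ≤ m := by
    intro e he
    obtain ⟨w, hw, rfl⟩ := (hER_mem e).1 he
    rw [hf_r w hw]
    have := hgr_mem w hw
    rw [Finset.mem_Icc] at this
    exact this
  have hfE0_range : ∀ e ∈ E0, k + 1 ≤ f e ∧ f e ≤ m - t := by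
    intro e he
    rw [hf_e0 e he]
    have := hf0mem e he
    rw [Finset.mem_Icc] at this
    exact this
  have hclasses : ∀ e ∈ G.edgeFinset, e ∈ ES ∨ e ∈ ER ∨ e ∈ E0 := by
    intro e he
    by_cases hP : (a ∈ e ∨ b ∈ e ∨ c ∈ e)
    · exact Or.inl (Finset.mem_filter.2 ⟨he, hP⟩)
    · by_cases hre : r ∈ e
      · exact Or.inr (Or.inl (Finset.mem_filter.2 ⟨he, hre⟩))
      · exact Or.inr (Or.inr (Finset.mem_filter.2 ⟨he, hP, hre⟩))
  -- the bijection property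
  have hmapsTo : ∀ e ∈ G.edgeFinset, f e ∈ Finset.Icc 1 m := by
    intro e he
    rw [Finset.mem_Icc]
    rcases hclasses e he with h | h | h
    · have := hfES_range e h; omega
    · have := hfER_range e h; omega
    · have := hfE0_range e h; omega
  have hinjOn : Set.InjOn f ↑G.edgeFinset := by
    intro e1 h1 e2 h2 heq
    rw [Finset.mem_coe] at h1 h2
    rcases hclasses e1 h1 with hc1 | hc1 | hc1 <;> rcases hclasses e2 h2 with hc2 | hc2 | hc2
    · -- both small
      have hm1 := Finset.mem_filter.1 hc1
      have hm2 := Finset.mem_filter.1 hc2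
      rcases hedge_small e1 hm1.1 hm1.2 with rfl | rfl | ⟨rfl, _⟩ <;>
        rcases hedge_small e2 hm2.1 hm2.2 with rfl | rfl | ⟨rfl, _⟩ <;>
        simp only [hfab, hfbc, hfac] at heq <;> first | rfl | omega
    · have r1 := hfES_range e1 hc1; have r2 := hfER_range e2 hc2; omega
    · have r1 := hfES_range e1 hc1; have r2 := hfE0_range e2 hc2; omega
    · have r1 := hfER_range e1 hc1; have r2 := hfES_range e2 hc2; omega
    · -- both in ER
      obtain ⟨w1, hw1, rfl⟩ := (hER_mem e1).1 hc1
      obtain ⟨w2, hw2, rfl⟩ := (hER_mem e2).1 hc2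
      rw [hf_r w1 hw1, hf_r w2 hw2] at heq
      rw [hgr_inj (Finset.mem_coe.2 hw1) (Finset.mem_coe.2 hw2) heq]
    · have r1 := hfER_range e1 hc1; have r2 := hfE0_range e2 hc2; omega
    · have r1 := hfE0_range e1 hc1; have r2 := hfES_range e2 hc2; omega
    · have r1 := hfE0_range e1 hc1; have r2 := hfER_range e2 hc2; omega
    · rw [hf_e0 e1 hc1, hf_e0 e2 hc2] at heq
      exact hf0inj (Finset.mem_coe.2 hc1) (Finset.mem_coe.2 hc2) heq
  have himage : G.edgeFinset.image f = Finset.Icc 1 m := by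
    apply Finset.eq_of_subset_of_card_le
    · intro j hj
      obtain ⟨e, he, rfl⟩ := Finset.mem_image.1 hj
      exact hmapsTo e he
    · rw [Nat.card_Icc, Finset.card_image_of_injOn hinjOn]
      omega
  have hbij : Set.BijOn f ↑G.edgeFinset ↑(Finset.Icc 1 m) := by
    refine ⟨fun e he => ?_, hinjOn, fun j hj => ?_⟩
    · rw [Finset.mem_coe] at he
      exact Finset.mem_coe.2 (hmapsTo e he)
    · rw [Finset.mem_coe] at hj
      rw [← himage] at hj
      obtain ⟨e, he, rfl⟩ := Finset.mem_image.1 hj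
      exact ⟨e, Finset.mem_coe.2 he, rfl⟩
  -- vertex sums
  set σ : V → ℕ := fun v => ∑ e ∈ G.incidenceFinset v, f e with hσdef
  -- sum at r
  have hER_img : ER = T.image (fun w => s(r,w)) := by
    ext e
    rw [hER_mem e, Finset.mem_image]
    constructor
    · rintro ⟨w, hw, rfl⟩; exact ⟨w, hw, rfl⟩
    · rintro ⟨w, hw, rfl⟩; exact ⟨w, hw, rfl⟩
  have hσr : σ r = ∑ j ∈ Finset.Icc (m-t+1) m, j := by
    simp only [hσdef]
    rw [hincR, hER_img]
    rw [Finset.sum_image (by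
      intro w1 _ w2 _ h
      rwa [Sym2.congr_right] at h)]
    rw [Finset.sum_congr rfl (fun w hw => hf_r w hw)]
    rw [← hgr_img]
    rw [Finset.sum_image (fun u hu v hv h => hgr_inj (Finset.mem_coe.2 hu) (Finset.mem_coe.2 hv) h)]
  -- sums on T
  have hincT : ∀ v ∈ T, G.incidenceFinset v = insert s(r,v) (E0.filter (fun e => v ∈ e)) := by
    intro v hv
    obtain ⟨hvS, hvr⟩ := (hmemT v).1 hv
    have hadjrv : G.Adj r v := by
      have := hv; rw [hTdef, SimpleGraph.mem_neighborFinset] at this; exact this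
    rw [SimpleGraph.incidenceFinset_eq_filter]
    ext e
    simp only [Finset.mem_filter, Finset.mem_insert]
    constructor
    · rintro ⟨he, hve⟩
      by_cases hre : r ∈ e
      · left
        obtain ⟨w, hw, rfl⟩ := (hER_mem e).1 (Finset.mem_filter.2 ⟨he, hre⟩)
        rw [Sym2.mem_iff] at hve
        rcases hve with rfl | rfl
        · exact absurd rfl hvr
        · rfl
      · right
        have hP : ¬(a ∈ e ∨ b ∈ e ∨ c ∈ e) := by
          intro hP
          rcases hedge_small e he hP with rfl | rfl | ⟨rfl, _⟩ <;>
            rw [Sym2.mem_iff] at hve <;>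
            rcases hve with rfl | rfl <;>
            exact hvS (by simp)
        exact ⟨Finset.mem_filter.2 ⟨he, hP, hre⟩, hve⟩
    · rintro (rfl | he)
      · exact ⟨SimpleGraph.mem_edgeFinset.2 hadjrv, by simp⟩
      · obtain ⟨he0, hve⟩ := he
        rw [hE0def, Finset.mem_filter] at he0
        exact ⟨he0.1, hve⟩
  have hσT : ∀ v ∈ T, σ v = gr v + sv v := by
    intro v hv
    simp only [hσdef]
    rw [hincT v hv]
    rw [Finset.sum_insert (by
      intro hmem
      have h9 := (Finset.mem_filter.1 hmem).1
      rw [hE0def, Finset.mem_filter] at h9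
      exact h9.2.2 (by simp))]
    rw [hf_r v hv, hsvdef]
    congr 1
    exact Finset.sum_congr rfl (fun e he => hf_e0 e (Finset.mem_filter.1 he).1)
  -- bound on sv
  have hsv_le : ∀ v ∈ T, sv v ≤ (t-1) * (m-t) := by
    intro v hv
    have hcard : (E0.filter (fun e => v ∈ e)).card ≤ t - 1 := by
      have hmaps : ∀ e ∈ E0.filter (fun e => v ∈ e),
          (if h : v ∈ e then Sym2.Mem.other' h else v) ∈ T.erase v := by
        intro e he
        obtain ⟨he0, hve⟩ := Finset.mem_filter.1 he
        obtain ⟨he1, hP, hre⟩ := Finset.mem_filter.1 he0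
        rw [dif_pos hve]
        have hspec := Sym2.other_spec' hve
        have hadj : G.Adj v (Sym2.Mem.other' hve) := by
          rw [← SimpleGraph.mem_edgeSet, hspec]
          exact SimpleGraph.mem_edgeFinset.1 he1
        rw [Finset.mem_erase]
        refine ⟨hadj.ne', ?_⟩
        rw [hmemT]
        constructor
        · intro hmemS
          apply hP
          have hom := Sym2.other_mem' hve
          simp only [Set.mem_insert_iff, Set.mem_singleton_iff] at hmemS
          rcases hmemS with h | h | h
          · exact Or.inl (h ▸ hom)
          · exact Or.inr (Or.inl (h ▸ hom))
          · exact Or.inr (Or.inr (h ▸ hom))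
        · intro hrw
          exact hre (hrw ▸ Sym2.other_mem' hve)
      have hinj : ∀ e1 ∈ E0.filter (fun e => v ∈ e), ∀ e2 ∈ E0.filter (fun e => v ∈ e),
          (if h : v ∈ e1 then Sym2.Mem.other' h else v) =
          (if h : v ∈ e2 then Sym2.Mem.other' h else v) → e1 = e2 := by
        intro e1 he1 e2 he2 heq
        have hv1 := (Finset.mem_filter.1 he1).2
        have hv2 := (Finset.mem_filter.1 he2).2
        rw [dif_pos hv1, dif_pos hv2] at heq
        rw [← Sym2.other_spec' hv1, ← Sym2.other_spec' hv2, heq]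
      have := Finset.card_le_card_of_injOn _ hmaps (fun e1 he1 e2 he2 h =>
        hinj e1 (Finset.mem_coe.1 he1) e2 (Finset.mem_coe.1 he2) h)
      rwa [Finset.card_erase_of_mem hv] at this
    calc sv v ≤ (E0.filter (fun e => v ∈ e)).card * (m - t) := by
          rw [hsvdef]
          have := Finset.sum_le_card_nsmul (E0.filter (fun e => v ∈ e)) f0 (m - t)
            (fun e he => (Finset.mem_Icc.1 (hf0mem e (Finset.mem_filter.1 he).1)).2)
          simpa using this
      _ ≤ (t-1) * (m-t) := Nat.mul_le_mul_right _ hcard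
  clear_value sv
  -- lower bound on σ r
  have hIccsplit : Finset.Icc (m-t+1) m = insert m (Finset.Icc (m-t+1) (m-1)) := by
    ext j
    simp only [Finset.mem_Icc, Finset.mem_insert]
    omega
  have hSumLow : m + (t-1) * (m-t+1) ≤ ∑ j ∈ Finset.Icc (m-t+1) m, j := by
    rw [hIccsplit, Finset.sum_insert (by rw [Finset.mem_Icc]; omega)]
    have h2 : (t-1) * (m-t+1) ≤ ∑ j ∈ Finset.Icc (m-t+1) (m-1), j := by
      have h3 := Finset.card_nsmul_le_sum (Finset.Icc (m-t+1) (m-1)) id (m-t+1)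
        (fun x hx => (Finset.mem_Icc.1 hx).1)
      rw [Nat.card_Icc] at h3
      have hc : m - 1 + 1 - (m - t + 1) = t - 1 := by omega
      rw [hc] at h3
      simpa using h3
    exact Nat.add_le_add_left h2 m
  -- comparison facts
  have hL1a : ∀ v ∈ T, 5 < σ v := by
    intro v hv
    rw [hσT v hv]
    have := (Finset.mem_Icc.1 (hgr_mem v hv)).1
    omega
  have hL1b : ∀ v ∈ T, σ v < σ r := by
    intro v hv
    rw [hσT v hv, hσr]
    have h1 : gr v ≤ m := (Finset.mem_Icc.1 (hgr_mem v hv)).2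
    have h2 := hsv_le v hv
    have h3 : gr v + sv v ≤ m + (t-1)*(m-t) := Nat.add_le_add h1 h2
    have h4 : (t-1) * (m-t+1) = (t-1)*(m-t) + (t-1) := by
      rw [Nat.mul_add, Nat.mul_one]
    have h5 : m + (t-1)*(m-t) < m + (t-1)*(m-t+1) := by
      rw [h4]
      have : 0 < t - 1 := by omega
      omega
    omega
  have hL2 : 5 < σ r := by
    rw [hσr]
    calc 5 < m := by omega
      _ ≤ m + (t-1)*(m-t+1) := Nat.le_add_right _ _
      _ ≤ _ := hSumLow
  -- sums at a, b, c
  have hincB : G.incidenceFinset b = {s(a,b), s(b,c)} := by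
    rw [SimpleGraph.incidenceFinset_eq_filter]
    ext e
    rw [Finset.mem_filter]
    constructor
    · rintro ⟨he, hbe⟩
      rcases hedge_small e he (Or.inr (Or.inl hbe)) with rfl | rfl | ⟨rfl, _⟩
      · simp
      · simp
      · rw [Sym2.mem_iff] at hbe
        rcases hbe with rfl | rfl
        · exact absurd rfl hab
        · exact absurd rfl hbc
    · intro he
      simp only [Finset.mem_insert, Finset.mem_singleton] at he
      rcases he with rfl | rfl
      · exact ⟨SimpleGraph.mem_edgeFinset.2 hadjab, by simp⟩
      · exact ⟨SimpleGraph.mem_edgeFinset.2 hadjbc, by simp⟩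
  have hσb : σ b = 3 := by
    simp only [hσdef]
    rw [hincB, Finset.sum_pair hne1.symm, hfab, hfbc]
  have hσac : (σ a = 1 ∧ σ c = 2) ∨ (σ a = 4 ∧ σ c = 5) := by
    rcases hcase with ⟨hnac, _⟩ | ⟨hadjac, _⟩
    · left
      have hincA : G.incidenceFinset a = {s(a,b)} := by
        rw [SimpleGraph.incidenceFinset_eq_filter]
        ext e
        rw [Finset.mem_filter]
        constructor
        · rintro ⟨he, hae⟩
          rcases hedge_small e he (Or.inl hae) with rfl | rfl | ⟨rfl, h⟩
          · simp
          · rw [Sym2.mem_iff] at hae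
            rcases hae with rfl | rfl
            · exact absurd rfl hab
            · exact absurd rfl hac
          · exact absurd h hnac
        · intro he
          rw [Finset.mem_singleton] at he
          subst he
          exact ⟨SimpleGraph.mem_edgeFinset.2 hadjab, by simp⟩
      have hincC : G.incidenceFinset c = {s(b,c)} := by
        rw [SimpleGraph.incidenceFinset_eq_filter]
        ext e
        rw [Finset.mem_filter]
        constructor
        · rintro ⟨he, hce⟩
          rcases hedge_small e he (Or.inr (Or.inr hce)) with rfl | rfl | ⟨rfl, h⟩
          · rw [Sym2.mem_iff] at hce
            rcases hce with rfl | rfl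
            · exact absurd rfl (Ne.symm hac)
            · exact absurd rfl (Ne.symm hbc)
          · simp
          · exact absurd h hnac
        · intro he
          rw [Finset.mem_singleton] at he
          subst he
          exact ⟨SimpleGraph.mem_edgeFinset.2 hadjbc, by simp⟩
      constructor
      · simp only [hσdef]
        rw [hincA, Finset.sum_singleton, hfab]
      · simp only [hσdef]
        rw [hincC, Finset.sum_singleton, hfbc]
    · right
      have hincA : G.incidenceFinset a = {s(a,b), s(a,c)} := by
        rw [SimpleGraph.incidenceFinset_eq_filter]
        ext e
        rw [Finset.mem_filter]
        constructor
        · rintro ⟨he, hae⟩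
          rcases hedge_small e he (Or.inl hae) with rfl | rfl | ⟨rfl, _⟩
          · simp
          · rw [Sym2.mem_iff] at hae
            rcases hae with rfl | rfl
            · exact absurd rfl hab
            · exact absurd rfl hac
          · simp
        · intro he
          simp only [Finset.mem_insert, Finset.mem_singleton] at he
          rcases he with rfl | rfl
          · exact ⟨SimpleGraph.mem_edgeFinset.2 hadjab, by simp⟩
          · exact ⟨SimpleGraph.mem_edgeFinset.2 hadjac, by simp⟩
      have hincC : G.incidenceFinset c = {s(b,c), s(a,c)} := by
        rw [SimpleGraph.incidenceFinset_eq_filter]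
        ext e
        rw [Finset.mem_filter]
        constructor
        · rintro ⟨he, hce⟩
          rcases hedge_small e he (Or.inr (Or.inr hce)) with rfl | rfl | ⟨rfl, _⟩
          · rw [Sym2.mem_iff] at hce
            rcases hce with rfl | rfl
            · exact absurd rfl (Ne.symm hac)
            · exact absurd rfl (Ne.symm hbc)
          · simp
          · simp
        · intro he
          simp only [Finset.mem_insert, Finset.mem_singleton] at he
          rcases he with rfl | rfl
          · exact ⟨SimpleGraph.mem_edgeFinset.2 hadjbc, by simp⟩
          · exact ⟨SimpleGraph.mem_edgeFinset.2 hadjac, by simp⟩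
      constructor
      · simp only [hσdef]
        rw [hincA, Finset.sum_pair hne2.symm, hfab, hfac]
      · simp only [hσdef]
        rw [hincC, Finset.sum_pair hne3.symm, hfbc, hfac]
  -- injectivity of σ on T
  have hσinjT : ∀ u ∈ T, ∀ v ∈ T, σ u = σ v → u = v := by
    intro u hu v hv huv
    by_contra hne
    rw [hσT u hu, hσT v hv] at huv
    exact hgr_sums u hu v hv hne (by omega)
  -- classification of vertices
  have hclassify : ∀ x : V, x = a ∨ x = b ∨ x = c ∨ x = r ∨ x ∈ T := by
    intro x
    by_cases hxS : x ∈ ({a,b,c} : Set V)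
    · simp only [Set.mem_insert_iff, Set.mem_singleton_iff] at hxS
      rcases hxS with h | h | h
      · exact Or.inl h
      · exact Or.inr (Or.inl h)
      · exact Or.inr (Or.inr (Or.inl h))
    · by_cases hxr : x = r
      · exact Or.inr (Or.inr (Or.inr (Or.inl hxr)))
      · exact Or.inr (Or.inr (Or.inr (Or.inr ((hmemT x).2 ⟨hxS, hxr⟩))))
  -- final injectivity
  refine ⟨f, hbij, ?_⟩
  show Function.Injective σ
  clear_value σ
  intro u v huv
  rcases hclassify u with rfl | rfl | rfl | rfl | hu <;>
    rcases hclassify v with rfl | rfl | rfl | rfl | hv <;>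
    first
    | rfl
    | exact hσinjT u hu v hv huv
    | (exfalso; rcases hσac with ⟨h1, h2⟩ | ⟨h1, h2⟩ <;> omega)
    | (exfalso; have h6 := hL1a v hv; have h7 := hL1b v hv;
        rcases hσac with ⟨h1, h2⟩ | ⟨h1, h2⟩ <;> omega)
    | (exfalso; have h6 := hL1a u hu; have h7 := hL1b u hu;
        rcases hσac with ⟨h1, h2⟩ | ⟨h1, h2⟩ <;> omega)
end
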